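/- arXiv:0811.3547 — 14 statements merged into one kernel-verified Lean document; each statement's English description precedes it below -/
import Mathlib

section
/- Let C be a small category, J a Grothendieck topology on C, and a_J : [Cᵒᵖ, Type] ⥤ Sh(C,J) the sheafification functor (left adjoint to the inclusion of sheaves into presheaves). If a presheaf P is an atom of the presheaf category [Cᵒᵖ, Type] and its sheafification a_J(P) is not an initial object of Sh(C,J), then a_J(P) is an atom of Sh(C,J). -/
open CategoryTheory CategoryTheory.Limits

universe u

/-- An object `A` of a category is an *atom* if it is not initial and every
monomorphism into it is either an isomorphism or has initial domain. -/
def IsAtomObj {E : Type*} [Category E] (A : E) : Prop :=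
  (¬ Nonempty (IsInitial A)) ∧
    ∀ ⦃S : E⦄ (m : S ⟶ A), Mono m → (IsIso m ∨ Nonempty (IsInitial S))

/-- A reflector (left adjoint of a fully faithful functor) which preserves
pullbacks sends atoms to atoms, provided the image is not initial. -/
theorem isAtomObj_of_reflective {C D : Type*} [Category C] [Category D]
    {L : C ⥤ D} {R : D ⥤ C} (adj : L ⊣ R) [R.Full] [R.Faithful]
    [HasPullbacks C] [HasPullbacks D]
    [PreservesLimitsOfShape WalkingCospan L]
    {P : C} (hP : IsAtomObj P) (h : ¬ Nonempty (IsInitial (L.obj P))) :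
    IsAtomObj (L.obj P) := by
  refine ⟨h, fun S m hm => ?_⟩
  haveI := hm
  haveI : R.IsRightAdjoint := ⟨L, ⟨adj⟩⟩
  haveI : Mono (R.map m) := R.map_mono m
  set f := R.map m with hf
  set g := adj.unit.app P with hg
  rcases hP.2 (pullback.snd f g) inferInstance with hiso | hT
  all_goals try obtain ⟨hT⟩ := hT
  · -- the pullback projection to `P` is an iso, hence `m` is a split epi
    haveI := hiso
    have key : (L.map (pullback.fst f g) ≫ adj.counit.app S) ≫ m =
        L.map (pullback.snd f g) := by
      rw [Category.assoc, ← adj.counit_naturality m, ← hf, ← Category.assoc,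
        ← L.map_comp, pullback.condition, L.map_comp, Category.assoc, hg]
      simp
    haveI : IsSplitEpi m :=
      ⟨⟨⟨inv (L.map (pullback.snd f g)) ≫
          (L.map (pullback.fst f g) ≫ adj.counit.app S), by
        rw [Category.assoc, key, IsIso.inv_hom_id]⟩⟩⟩
    exact Or.inl (isIso_of_mono_of_isSplitEpi m)
  · -- the pullback is initial, hence so is `S`
    haveI := adj.leftAdjoint_preservesColimits
    have hLT : IsInitial (L.obj (pullback f g)) := hT.isInitialObj L _
    have hX : IsInitial (pullback (L.map f) (L.map g)) :=
      hLT.ofIso (PreservesPullback.iso L f g)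
    haveI : IsIso adj.counit := adj.counit_isIso_of_R_fully_faithful
    have hcomm : inv (adj.counit.app S) ≫ L.map f = m ≫ L.map g := by
      rw [← cancel_mono (adj.counit.app (L.obj P)), Category.assoc,
        Category.assoc, hf, adj.counit_naturality m, hg,
        adj.left_triangle_components, Category.comp_id, ← Category.assoc,
        IsIso.inv_hom_id, Category.id_comp]
    set l := pullback.lift (inv (adj.counit.app S)) m hcomm with hl
    have h2 : (l ≫ hX.to S) ≫ m = 𝟙 S ≫ m := by
      have e : hX.to S ≫ m =
          pullback.fst (L.map f) (L.map g) ≫ adj.counit.app S ≫ m :=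
        hX.hom_ext _ _
      rw [Category.assoc, e, ← Category.assoc, ← Category.assoc, hl,
        pullback.lift_fst, Category.assoc, ← Category.assoc,
        IsIso.inv_hom_id, Category.id_comp, Category.id_comp]
    have h1 : l ≫ hX.to S = 𝟙 S := by rwa [cancel_mono m] at h2
    exact Or.inr ⟨hX.ofIso ⟨hX.to S, l, hX.hom_ext _ _, h1⟩⟩

/-- Sheafification sends atoms of the presheaf category to atoms of the sheaf
category, provided the sheafification is not initial. -/
theorem stmt0 {C : Type u} [SmallCategory C] (J : GrothendieckTopology C)
    (P : Cᵒᵖ ⥤ Type u) (hP : IsAtomObj P)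
    (h : ¬ Nonempty (IsInitial ((presheafToSheaf J (Type u)).obj P))) :
    IsAtomObj ((presheafToSheaf J (Type u)).obj P) := by
  exact isAtomObj_of_reflective (sheafificationAdjunction J (Type u)) hP h
end

section
/- Let C be a small category and J ≤ K two Grothendieck topologies on C. If F is a J-sheaf of types which is an atom of Sh(C,J), and the K-sheafification a_K(F) of its underlying presheaf is not an initial object of Sh(C,K), then a_K(F) is an atom of Sh(C,K). -/
open CategoryTheory CategoryTheory.Limits

universe u

lemma aux_isIso_fst {D : Type*} [Category D] {P X Y Z : D}
    {fst : P ⟶ X} {snd : P ⟶ Y} {f : X ⟶ Z} {g : Y ⟶ Z}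
    (hpb : IsPullback fst snd f g) [IsIso g] : IsIso fst := by
  have h' : IsPullback (𝟙 X) (f ≫ inv g) f g :=
    IsPullback.of_horiz_isIso ⟨by simp⟩
  have := hpb.isoIsPullback_hom_fst _ _ h'
  rw [Category.comp_id] at this
  rw [← this]
  infer_instance

lemma aux_isSheaf_le {C : Type u} [SmallCategory C] {J K : GrothendieckTopology C}
    (hJK : J ≤ K) {P : Cᵒᵖ ⥤ Type u} (hP : Presheaf.IsSheaf K P) :
    Presheaf.IsSheaf J P := by
  rw [isSheaf_iff_isSheaf_of_type] at hP ⊢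
  exact Presieve.isSheaf_of_le _ hJK hP

/-- If `J ≤ K`, an atom `F` of `Sh(C,J)` whose `K`-sheafification is not initial
has `K`-sheafification an atom of `Sh(C,K)`. -/
theorem stmt1 {C : Type u} [SmallCategory C] (J K : GrothendieckTopology C)
    (hJK : J ≤ K) (F : Sheaf J (Type u)) (hF : IsAtomObj F)
    (h : ¬ Nonempty (IsInitial ((presheafToSheaf K (Type u)).obj F.val))) :
    IsAtomObj ((presheafToSheaf K (Type u)).obj F.val) := by
  classical
  refine ⟨h, ?_⟩
  intro S m hm
  let adj := sheafificationAdjunction K (Type u)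
  let A : Sheaf K (Type u) := (presheafToSheaf K (Type u)).obj F.val
  let η : F.val ⟶ A.val := adj.unit.app F.val
  haveI := hm
  have hmv : Mono m.hom := (sheafToPresheaf K (Type u)).map_mono m
  -- J-sheaf versions
  let S' : Sheaf J (Type u) := ⟨S.val, aux_isSheaf_le hJK S.cond⟩
  let A' : Sheaf J (Type u) := ⟨A.val, aux_isSheaf_le hJK A.cond⟩
  let m' : S' ⟶ A' := ⟨m.hom⟩
  let φ : F ⟶ A' := ⟨η⟩
  haveI : Mono m' := by
    apply Sheaf.Hom.mono_of_presheaf_mono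
  let T := pullback m' φ
  let t : T ⟶ F := pullback.snd m' φ
  haveI ht : Mono t := inferInstance
  rcases hF.2 t ht with hiso | hT
  · -- m is split epi
    left
    let s : F ⟶ S' := inv t ≫ pullback.fst m' φ
    have hs : s ≫ m' = φ := by
      simp [s, pullback.condition]
    have hsv : s.hom ≫ m.hom = η := congrArg InducedCategory.Hom.hom hs
    let σ : A ⟶ S := (adj.homEquiv F.val S).symm s.hom
    have hσu : η ≫ σ.hom = s.hom := by
      have : adj.homEquiv F.val S ((adj.homEquiv F.val S).symm s.hom) = s.hom :=
        (adj.homEquiv F.val S).right_inv s.hom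
      rw [Adjunction.homEquiv_unit] at this
      exact this
    have hσ : σ ≫ m = 𝟙 A := by
      apply (adj.homEquiv F.val A).injective
      rw [Adjunction.homEquiv_unit, Adjunction.homEquiv_unit]
      rw [CategoryTheory.Functor.map_comp, CategoryTheory.Functor.map_id]
      show η ≫ σ.hom ≫ m.hom = η ≫ 𝟙 A.val
      rw [Category.comp_id, ← Category.assoc, hσu, hsv]
    haveI : IsSplitEpi m := ⟨⟨⟨σ, hσ⟩⟩⟩
    exact isIso_of_mono_of_isSplitEpi m
  · -- S is initial
    right
    obtain ⟨hT⟩ := hT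
    -- a_K T.val is initial
    have hinit : IsInitial ((presheafToSheaf K (Type u)).obj T.val) := by
      refine IsInitial.ofUniqueHom
        (fun Y => (adj.homEquiv T.val Y).symm
          (hT.to ⟨Y.val, aux_isSheaf_le hJK Y.cond⟩).hom) ?_
      intro Y g
      apply_fun (adj.homEquiv T.val Y)
      rw [Equiv.apply_symm_apply]
      let Y' : Sheaf J (Type u) := ⟨Y.val, aux_isSheaf_le hJK Y.cond⟩
      have : (⟨adj.homEquiv T.val Y g⟩ : T ⟶ Y') = hT.to Y' := hT.hom_ext _ _
      exact congrArg InducedCategory.Hom.hom this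
    -- pullback square mapped to Sh(C,K)
    have sq : IsPullback (pullback.fst m' φ) t m' φ := IsPullback.of_hasPullback m' φ
    have sq1 := sq.map (sheafToPresheaf J (Type u))
    have sq2 := sq1.map (presheafToSheaf K (Type u))
    have hηiso : IsIso ((presheafToSheaf K (Type u)).map η) := by
      have tri := adj.left_triangle_components F.val
      haveI : IsIso (adj.counit.app A) := inferInstance
      exact IsIso.of_isIso_fac_right tri
    haveI : IsIso ((presheafToSheaf K (Type u)).map ((sheafToPresheaf J (Type u)).map φ)) := hηiso
    have hfst : IsIso ((presheafToSheaf K (Type u)).map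
        ((sheafToPresheaf J (Type u)).map (pullback.fst m' φ))) := aux_isIso_fst sq2
    -- assemble isomorphism S ≅ a_K T.val
    haveI : IsIso (adj.counit.app S) := inferInstance
    let e1 : (presheafToSheaf K (Type u)).obj T.val ≅ (presheafToSheaf K (Type u)).obj S.val :=
      @asIso _ _ _ _ _ hfst
    let e2 : (presheafToSheaf K (Type u)).obj S.val ≅ S := asIso (adj.counit.app S)
    exact ⟨hinit.ofIso (e1 ≪≫ e2)⟩
end

section
/- Let C be a small category, J a Grothendieck topology on C, and S a separating set of objects of Sh(C,J) each of which is an atom. Then an object X of Sh(C,J) is an atom if and only if there exist an object a ∈ S and an epimorphism a ⟶ X in Sh(C,J). -/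
open CategoryTheory CategoryTheory.Limits

universe u

namespace AtomAux

open CategoryTheory.GrothendieckTopology Opposite

variable {C : Type u} [SmallCategory C] {J : GrothendieckTopology C}

lemma bot_pullback {c d : C} (g : d ⟶ c) : (⊥ : Sieve c).pullback g = ⊥ := by
  ext e f
  exact Iff.rfl

lemma bot_stable {c d : C} (hc : (⊥ : Sieve c) ∈ J c) (g : d ⟶ c) :
    (⊥ : Sieve d) ∈ J d := by
  simpa [bot_pullback] using J.pullback_stable g hc

lemma bot_trans {c : C} {S : Sieve c} (hS : S ∈ J c)
    (h : ∀ ⦃d : C⦄ ⦃f : d ⟶ c⦄, S f → (⊥ : Sieve d) ∈ J d) :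
    (⊥ : Sieve c) ∈ J c :=
  J.transitive hS _ (fun _ f hf => by
    rw [bot_pullback]
    exact h hf)

lemma subsingleton_sections (Y : Sheaf J (Type u)) {c : C}
    (hc : (⊥ : Sieve c) ∈ J c) (y₁ y₂ : Y.val.obj (op c)) : y₁ = y₂ := by
  have hY := (isSheaf_iff_isSheaf_of_type J Y.val).1 Y.cond
  obtain ⟨t, _, ht⟩ := hY _ hc (fun d f hf => ((Set.mem_empty_iff_false f).1 hf).elim)
    (by rintro Y₁ Y₂ Z g₁ g₂ f₁ f₂ h₁ h₂ _
        exact ((Set.mem_empty_iff_false f₁).1 h₁).elim)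
  rw [ht y₁ (fun d f hf => ((Set.mem_empty_iff_false f).1 hf).elim),
    ht y₂ (fun d f hf => ((Set.mem_empty_iff_false f).1 hf).elim)]

lemma nonempty_sections (Y : Sheaf J (Type u)) {c : C}
    (hc : (⊥ : Sieve c) ∈ J c) : Nonempty (Y.val.obj (op c)) := by
  have hY := (isSheaf_iff_isSheaf_of_type J Y.val).1 Y.cond
  obtain ⟨t, _, _⟩ := hY _ hc (fun d f hf => ((Set.mem_empty_iff_false f).1 hf).elim)
    (by rintro Y₁ Y₂ Z g₁ g₂ f₁ f₂ h₁ h₂ _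
        exact ((Set.mem_empty_iff_false f₁).1 h₁).elim)
  exact ⟨t⟩

/-- A sheaf is "degenerate" if its sections only exist over objects covered by the
empty sieve. -/
def Deg (X : Sheaf J (Type u)) : Prop :=
  ∀ (c : Cᵒᵖ), X.val.obj c → (⊥ : Sieve c.unop) ∈ J c.unop

noncomputable def isInitialOfDeg {I : Sheaf J (Type u)} (hI : Deg I) : IsInitial I :=
  IsInitial.ofUniqueHom
    (fun Y => ⟨{
      app := fun c => TypeCat.ofHom fun s => (nonempty_sections Y (hI c s)).some
      naturality := by
        intro c d g
        ext s
        exact subsingleton_sections Y (hI d (I.val.map g s)) _ _ }⟩)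
    (fun Y φ => by
      apply Sheaf.hom_ext
      apply NatTrans.ext
      funext c
      ext s
      exact subsingleton_sections Y (hI c s) _ _)

variable (J) in
/-- The presheaf whose sections over `c` witness that the empty sieve covers `c`. -/
def degPresheaf : Cᵒᵖ ⥤ Type u where
  obj c := ULift (PLift ((⊥ : Sieve c.unop) ∈ J c.unop))
  map {c d} g := TypeCat.ofHom fun x => ⟨⟨bot_stable x.down.down g.unop⟩⟩

lemma degPresheaf_isSheaf : Presieve.IsSheaf J (degPresheaf J) := by
  intro c S hS x hx
  refine ⟨⟨⟨bot_trans hS (fun d f hf => (x f hf).down.down)⟩⟩, ?_, ?_⟩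
  · intro d f hf
    rfl
  · intro t ht
    rfl

variable (J) in
def degSheaf : Sheaf J (Type u) :=
  ⟨degPresheaf J, (isSheaf_iff_isSheaf_of_type _ _).2 degPresheaf_isSheaf⟩

lemma deg_of_isInitial {I : Sheaf J (Type u)} (hI : IsInitial I) : Deg I :=
  fun c s => ((hI.to (degSheaf J)).hom.app c s).down.down

lemma app_injective {T X : Sheaf J (Type u)} (m : T ⟶ X) (hm : Mono m) (c : Cᵒᵖ) :
    Function.Injective (m.hom.app c) := by
  rw [← CategoryTheory.mono_iff_injective]
  have h1 : Mono m.hom := (Sheaf.Hom.mono_iff_presheaf_mono J (Type u) m).1 hm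
  exact (NatTrans.mono_iff_mono_app m.hom).1 h1 c

variable (J) in
def degSieve (c : C) : Sieve c where
  arrows d f := (⊥ : Sieve d) ∈ J d
  downward_closed := fun {d e f} hf g => bot_stable hf g

lemma degSieve_pullback {c d : C} (g : d ⟶ c) :
    (degSieve J c).pullback g = degSieve J d := by
  ext e f
  exact Iff.rfl

lemma degSieve_closed (c : C) : J.IsClosed (degSieve J c) := by
  intro d f hcov
  rw [GrothendieckTopology.covers_iff, degSieve_pullback] at hcov
  exact bot_trans hcov (fun e g hg => hg)

lemma isAtomObj_of_epi {a X : Sheaf J (Type u)} (ha : IsAtomObj a)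
    (e : a ⟶ X) (he : Epi e) : IsAtomObj X := by
  constructor
  · rintro ⟨hX⟩
    exact ha.1 ⟨isInitialOfDeg (fun c s => deg_of_isInitial hX c (e.hom.app c s))⟩
  · intro T m hm
    have hminj : ∀ c, Function.Injective (m.hom.app c) := app_injective m hm
    have hle : Sheaf.IsLocallySurjective e := (Sheaf.isLocallySurjective_iff_epi e).2 he
    -- the preimage under `e` of the image of `m`, as a subpresheaf of `a`
    let G : Subfunctor a.val :=
      { obj := fun c => {s | ∃ t : T.val.obj c, m.hom.app c t = e.hom.app c s}
        map := by
          rintro c d g s ⟨t, ht⟩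
          exact ⟨T.val.map g t, by
            rw [FunctorToTypes.naturality, ht, FunctorToTypes.naturality]⟩ }
    have hGsheaf : Presieve.IsSheaf J G.toFunctor := by
      intro c S hS x hx
      have hasheaf := (isSheaf_iff_isSheaf_of_type J a.val).1 a.cond
      have hXsheaf := (isSheaf_iff_isSheaf_of_type J X.val).1 X.cond
      have hTsheaf := (isSheaf_iff_isSheaf_of_type J T.val).1 T.cond
      let xa : Presieve.FamilyOfElements a.val (S : Presieve c) := fun d f hf => (x f hf).1
      have hxa : xa.Compatible := by
        intro d₁ d₂ d g₁ g₂ f₁ f₂ h₁ h₂ hcomm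
        exact congrArg Subtype.val (hx g₁ g₂ h₁ h₂ hcomm)
      obtain ⟨s, hs, hsuniq⟩ := hasheaf S hS xa hxa
      let xt : Presieve.FamilyOfElements T.val (S : Presieve c) :=
        fun d f hf => (x f hf).2.choose
      have hxtm : ∀ {d : C} (f : d ⟶ c) (hf : S f),
          m.hom.app _ (xt f hf) = e.hom.app _ (xa f hf) :=
        fun f hf => (x f hf).2.choose_spec
      have hxt : xt.Compatible := by
        intro d₁ d₂ d g₁ g₂ f₁ f₂ h₁ h₂ hcomm
        apply hminj
        rw [FunctorToTypes.naturality, FunctorToTypes.naturality, hxtm f₁ h₁, hxtm f₂ h₂,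
          ← FunctorToTypes.naturality, ← FunctorToTypes.naturality]
        exact congrArg (e.hom.app _) (hxa g₁ g₂ h₁ h₂ hcomm)
      obtain ⟨t, htam, _⟩ := hTsheaf S hS xt hxt
      have hmem : s ∈ G.obj (op c) := by
        refine ⟨t, ?_⟩
        apply (hXsheaf S hS).isSeparatedFor.ext
        intro d f hf
        rw [← FunctorToTypes.naturality, ← FunctorToTypes.naturality, htam f hf,
          hs f hf, hxtm f hf]
      refine ⟨⟨s, hmem⟩, ?_, ?_⟩
      · intro d f hf
        exact Subtype.ext (hs f hf)
      · rintro ⟨s', hs'⟩ ham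
        exact Subtype.ext (hsuniq s' (fun d f hf => congrArg Subtype.val (ham f hf)))
    let Gs : Sheaf J (Type u) := ⟨G.toFunctor, (isSheaf_iff_isSheaf_of_type _ _).2 hGsheaf⟩
    let ι : Gs ⟶ a := ⟨G.ι⟩
    have hιmono : Mono ι := by
      rw [Sheaf.Hom.mono_iff_presheaf_mono]
      show Mono G.ι
      infer_instance
    rcases ha.2 ι hιmono with hiso | hGinit
    · left
      have hsur : ∀ (c : Cᵒᵖ) (s : a.val.obj c), s ∈ G.obj c := by
        intro c s
        have hw := congrArg (fun (f : a ⟶ a) => f.hom.app c s) (IsIso.inv_hom_id ι)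
        simp only [ObjectProperty.FullSubcategory.comp_hom, ObjectProperty.FullSubcategory.id_hom,
          FunctorToTypes.comp, NatTrans.id_app, types_id_apply] at hw
        exact hw ▸ ((inv ι).hom.app c s).2
      let φ : a ⟶ T := ⟨{
        app := fun c => TypeCat.ofHom fun s => (hsur c s).choose
        naturality := by
          intro c d g
          ext s
          apply hminj
          simp only [TypeCat.Fun.toFun_apply, types_comp_apply, TypeCat.ofHom_apply]
          rw [(hsur d (a.val.map g s)).choose_spec, FunctorToTypes.naturality,
            FunctorToTypes.naturality, (hsur c s).choose_spec] }⟩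
      have hfac : φ ≫ m = e := by
        apply Sheaf.hom_ext
        apply NatTrans.ext
        funext c
        ext s
        exact (hsur c s).choose_spec
      have : Epi m := epi_of_epi_fac hfac
      haveI := hm
      exact isIso_of_mono_of_epi m
    · right
      obtain ⟨hGinit⟩ := hGinit
      have hdegG : Deg Gs := deg_of_isInitial hGinit
      refine ⟨isInitialOfDeg ?_⟩
      intro c t
      have hsieve := Presheaf.imageSieve_mem J e.hom (m.hom.app c t)
      refine bot_trans hsieve ?_
      intro d f hf
      obtain ⟨s, hsval⟩ := hf
      have hmem : s ∈ G.obj (op d) := by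
        refine ⟨T.val.map f.op t, ?_⟩
        rw [FunctorToTypes.naturality]
        exact hsval.symm
      exact hdegG (op d) ⟨s, hmem⟩


section Main

variable {C : Type u} [SmallCategory C] {J : GrothendieckTopology C}

theorem stmt2' (S : Set (Sheaf J (Type u))) (hsep : ObjectProperty.IsSeparating S)
    (hatom : ∀ a ∈ S, IsAtomObj a) (X : Sheaf J (Type u)) :
    IsAtomObj X ↔ ∃ a ∈ S, ∃ e : a ⟶ X, Epi e := by
  constructor
  · intro hX
    -- the sheaf of closed sieves
    let Ω : Sheaf J (Type u) :=
      ⟨(Functor.closedSieves J).toFunctor, (isSheaf_iff_isSheaf_of_type _ _).2 (classifier_isSheaf J)⟩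
    let τ : X ⟶ Ω := ⟨{
      app := fun c => TypeCat.ofHom fun _ => ⟨(⊤ : Sieve c.unop), fun d f _ => trivial⟩
      naturality := by
        intro c d g
        ext s
        exact Subtype.ext Sieve.pullback_top.symm }⟩
    let δ : X ⟶ Ω := ⟨{
      app := fun c => TypeCat.ofHom fun _ => ⟨degSieve J c.unop, degSieve_closed c.unop⟩
      naturality := by
        intro c d g
        ext s
        exact Subtype.ext (degSieve_pullback g.unop).symm }⟩
    have hτδ : τ ≠ δ := by
      intro h
      apply hX.1
      refine ⟨isInitialOfDeg ?_⟩
      intro c s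
      have h2 := congrArg (fun (f : X ⟶ Ω) => (f.hom.app c s).1) h
      have h3 : (⊤ : Sieve c.unop) = degSieve J c.unop := h2
      have hid : degSieve J c.unop (𝟙 c.unop) := by
        rw [← h3]
        trivial
      exact hid
    obtain ⟨a, haS, hh⟩ : ∃ a ∈ S, Nonempty (a ⟶ X) := by
      by_contra hcon
      push_neg at hcon
      refine hτδ (hsep τ δ (fun a haS h => (hcon a haS).elim h))
    obtain ⟨h⟩ := hh
    rcases hX.2 (Sheaf.imageι h) inferInstance with hiso | hinit
    · refine ⟨a, haS, h, ?_⟩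
      rw [← Sheaf.toImage_ι h]
      exact epi_comp _ _
    · obtain ⟨hinit⟩ := hinit
      have hdeg : Deg a := fun c s => deg_of_isInitial hinit c ((Sheaf.toImage h).hom.app c s)
      exact absurd ⟨isInitialOfDeg hdeg⟩ (hatom a haS).1
  · rintro ⟨a, haS, e, he⟩
    exact isAtomObj_of_epi (hatom a haS) e he

end Main

end AtomAux


/-- If `Sh(C,J)` has a separating set of atoms `S`, then the atoms of `Sh(C,J)`
are exactly the epimorphic images of objects of `S`. -/
theorem stmt2 {C : Type u} [SmallCategory C] (J : GrothendieckTopology C)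
    (S : Set (Sheaf J (Type u))) (hsep : ObjectProperty.IsSeparating S)
    (hatom : ∀ a ∈ S, IsAtomObj a) (X : Sheaf J (Type u)) :
    IsAtomObj X ↔ ∃ a ∈ S, ∃ e : a ⟶ X, Epi e :=
  AtomAux.stmt2' S hsep hatom X
end

section
/- Let C be a small category, J a Grothendieck topology on C, and S a separating set of objects of Sh(C,J) each of which is an atom. Then the full subcategory of Sh(C,J) on the objects of S satisfies the right Ore condition: for any morphisms f : a ⟶ c and g : b ⟶ c between objects of S there exist d ∈ S and morphisms p : d ⟶ a, q : d ⟶ b with p ≫ f = q ≫ g. -/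
open CategoryTheory CategoryTheory.Limits Opposite

universe u

namespace Stmt3Aux

variable {C : Type u} [SmallCategory C] (J : GrothendieckTopology C)

/-- The sheaf of closed sieves. -/
noncomputable def Omega : Sheaf J (Type u) :=
  ⟨(Functor.closedSieves J).toFunctor, by
    rw [isSheaf_iff_isSheaf_of_type]
    exact classifier_isSheaf J⟩

lemma isClosed_top {X : C} : J.IsClosed (⊤ : Sieve X) := fun _ _ _ => trivial

lemma bot_pullback {X Y : C} (f : Y ⟶ X) : (⊥ : Sieve X).pullback f = ⊥ := by
  ext Z g
  exact Iff.rfl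

variable {J}

/-- The characteristic map of the top subobject. -/
def chiT (X : Sheaf J (Type u)) : X ⟶ Omega J :=
  ⟨{ app := fun _ => TypeCat.ofHom fun _ => ⟨(⊤ : Sieve _), isClosed_top J⟩
     naturality := fun V W h => by
       ext s
       exact Subtype.ext (Sieve.pullback_top (f := h.unop)).symm }⟩

/-- The characteristic map of the closure of the bottom subobject. -/
def chiB (X : Sheaf J (Type u)) : X ⟶ Omega J :=
  ⟨{ app := fun _ => TypeCat.ofHom fun _ => ⟨J.close ⊥, J.close_isClosed ⊥⟩
     naturality := fun V W h => by
       ext s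
       refine Subtype.ext ?_
       show J.close ⊥ = (J.close ⊥).pullback h.unop
       rw [← J.pullback_close, bot_pullback] }⟩

lemma comp_chiT {X Z : Sheaf J (Type u)} (t : X ⟶ Z) : t ≫ chiT Z = chiT X := rfl

lemma comp_chiB {X Z : Sheaf J (Type u)} (t : X ⟶ Z) : t ≫ chiB Z = chiB X := rfl

/-- Over an object covered by the empty sieve, a sheaf has a unique section. -/
lemma sections_subsingleton (Y : Sheaf J (Type u)) {V : Cᵒᵖ}
    (hV : (⊥ : Sieve V.unop) ∈ J V.unop) :
    Nonempty (Y.val.obj V) ∧ Subsingleton (Y.val.obj V) := by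
  have hY := (isSheaf_iff_isSheaf_of_type _ _).1 Y.cond
  have h := hY _ hV
  have hx : ∀ (x : Presieve.FamilyOfElements Y.val
      ((⊥ : Sieve V.unop) : Presieve V.unop)), x.Compatible := by
    intro x
    intro Z₁ Z₂ W g₁ g₂ f₁ f₂ h₁ h₂ _
    exact (h₁ : False).elim
  -- the empty family of elements
  let x : Presieve.FamilyOfElements Y.val ((⊥ : Sieve V.unop) : Presieve V.unop) :=
    fun Z g hg => False.elim (by simpa using hg)
  obtain ⟨t, -, ht⟩ := h x (hx x)
  have hsub : Subsingleton (Y.val.obj (op V.unop)) := by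
    constructor
    intro y z
    have hy := ht y (fun Z g hg => False.elim (by simpa using hg))
    have hz := ht z (fun Z g hg => False.elim (by simpa using hg))
    rw [hy, hz]
  exact ⟨⟨t⟩, hsub⟩

/-- A sheaf all of whose sections live over objects covered by the empty sieve is initial. -/
noncomputable def mkInitial (X : Sheaf J (Type u))
    (h : ∀ (V : Cᵒᵖ), X.val.obj V → (⊥ : Sieve V.unop) ∈ J V.unop) : IsInitial X :=
  IsInitial.ofUniqueHom
    (fun Y =>
      ⟨{ app := fun V => TypeCat.ofHom fun s => ((sections_subsingleton Y (h V s)).1).some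
         naturality := fun V W t => by
           ext s
           have := (sections_subsingleton Y (h W (X.val.map t s))).2
           exact Subsingleton.elim _ _ }⟩)
    (fun Y m => by
      apply Sheaf.hom_ext
      ext V s
      have := (sections_subsingleton Y (h V s)).2
      exact Subsingleton.elim _ _)

lemma initial_of_chi_eq {X : Sheaf J (Type u)} (h : chiT X = chiB X) :
    Nonempty (IsInitial X) := by
  refine ⟨mkInitial X fun V s => ?_⟩
  have h1 := ConcreteCategory.congr_hom (congr_app (congrArg InducedCategory.Hom.hom h) V) s
  have h2 : (⊤ : Sieve V.unop) = J.close ⊥ := congrArg Subtype.val h1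
  rw [← J.close_eq_top_iff_mem]
  exact h2.symm

lemma chi_eq_of_initial {X : Sheaf J (Type u)} (h : IsInitial X) : chiT X = chiB X :=
  h.hom_ext _ _

/-- A non-initial object admitting a morphism to an atom maps epimorphically onto it. -/
lemma epi_to_atom {X Z : Sheaf J (Type u)} (hZ : IsAtomObj Z)
    (hX : ¬ Nonempty (IsInitial X)) (f : X ⟶ Z) : Epi f := by
  rcases hZ.2 (Sheaf.imageι f) inferInstance with hiso | hI
  · rw [← Sheaf.toImage_ι f]
    have : IsIso (Sheaf.imageι f) := hiso
    exact epi_comp _ _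
  · exfalso
    apply hX
    apply initial_of_chi_eq
    calc chiT X = Sheaf.toImage f ≫ chiT (Sheaf.image f) := (comp_chiT _).symm
      _ = Sheaf.toImage f ≫ chiB (Sheaf.image f) := by rw [chi_eq_of_initial hI.some]
      _ = chiB X := comp_chiB _

/-- A section of the pullback sheaf from a pair of compatible sections. -/
lemma pullback_section {X Y Z : Sheaf J (Type u)} (f : X ⟶ Z) (g : Y ⟶ Z) (V : Cᵒᵖ)
    (x : X.val.obj V) (y : Y.val.obj V) (hxy : f.hom.app V x = g.hom.app V y) :
    ∃ z : (pullback f g).val.obj V,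
      (pullback.fst f g).hom.app V z = x ∧ (pullback.snd f g).hom.app V z = y := by
  let Γ : Sheaf J (Type u) ⥤ Type u :=
    sheafToPresheaf J (Type u) ⋙ (evaluation Cᵒᵖ (Type u)).obj V
  have hl := isLimitOfHasPullbackOfPreservesLimit Γ f g
  let e := PullbackCone.IsLimit.equivPullbackObj hl
  have hxy' : Γ.map f x = Γ.map g y := hxy
  refine ⟨e.symm ⟨(x, y), hxy'⟩, ?_, ?_⟩
  · exact PullbackCone.IsLimit.equivPullbackObj_symm_apply_fst hl ⟨(x, y), hxy'⟩
  · exact PullbackCone.IsLimit.equivPullbackObj_symm_apply_snd hl ⟨(x, y), hxy'⟩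

end Stmt3Aux

open Stmt3Aux

/-- If `Sh(C,J)` has a separating set of atoms `S`, then the full subcategory on
`S` satisfies the right Ore condition. -/
theorem stmt3 {C : Type u} [SmallCategory C] (J : GrothendieckTopology C)
    (S : Set (Sheaf J (Type u))) (hsep : ObjectProperty.IsSeparating S)
    (hatom : ∀ a ∈ S, IsAtomObj a)
    (a b c : Sheaf J (Type u)) (ha : a ∈ S) (hb : b ∈ S) (hc : c ∈ S)
    (f : a ⟶ c) (g : b ⟶ c) :
    ∃ d, d ∈ S ∧ ∃ (p : d ⟶ a) (q : d ⟶ b), p ≫ f = q ≫ g := by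
  classical
  have hatoma := hatom a ha
  have hatomb := hatom b hb
  have hatomc := hatom c hc
  have epi_g : Epi g := epi_to_atom hatomc hatomb.1 g
  -- the first projection of the pullback is epi (local surjectivity is stable under pullback)
  have hgsurj : Sheaf.IsLocallySurjective g :=
    (Sheaf.isLocallySurjective_iff_epi g).2 epi_g
  have hfstsurj : Sheaf.IsLocallySurjective (pullback.fst f g) := by
    constructor
    intro U s
    apply J.superset_covering ?_ (Presheaf.imageSieve_mem J g.hom (f.hom.app (op U) s))
    rintro W h ⟨t, ht⟩
    have hnat : f.hom.app (op W) (a.val.map h.op s) = c.val.map h.op (f.hom.app (op U) s) :=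
      FunctorToTypes.naturality f.hom h.op s
    obtain ⟨z, hz1, -⟩ :=
      pullback_section f g (op W) (a.val.map h.op s) t (hnat.trans ht.symm)
    exact ⟨z, hz1⟩
  have epi_fst : Epi (pullback.fst f g) := by
    have := hfstsurj
    infer_instance
  -- the pullback is not initial
  have hP : chiT (pullback f g) ≠ chiB (pullback f g) := by
    intro heq
    obtain ⟨hI⟩ := initial_of_chi_eq heq
    apply hatoma.1
    apply initial_of_chi_eq
    have : pullback.fst f g ≫ chiT a = pullback.fst f g ≫ chiB a := by
      rw [comp_chiT, comp_chiB]
      exact hI.hom_ext _ _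
    exact (cancel_epi (pullback.fst f g)).1 this
  -- use separation to find a point of the pullback from `S`
  by_contra hcon
  push_neg at hcon
  apply hP
  apply hsep
  intro d hd h
  exfalso
  exact (hcon d hd (h ≫ pullback.fst f g) (h ≫ pullback.snd f g))
    (by simp [Category.assoc, pullback.condition])
end

section
/- Let C be a small category and let J_at be the smallest Grothendieck topology on C (in the complete lattice of Grothendieck topologies on C) for which every nonempty sieve is covering. Let C' be the full subcategory of C on the objects c such that the empty sieve on c is not J_at-covering. Then C' satisfies the right Ore condition: for any morphisms f : a ⟶ c and g : b ⟶ c between objects of C' there exist d ∈ C' and morphisms p : d ⟶ a, q : d ⟶ b with p ≫ f = q ≫ g. -/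
open CategoryTheory CategoryTheory.Limits

universe u

/-- Let `Jat` be the smallest Grothendieck topology on `C` for which every
nonempty sieve is covering. The full subcategory of `C` on the objects whose
empty sieve is not `Jat`-covering satisfies the right Ore condition. -/
theorem stmt5 {C : Type u} [SmallCategory C] (Jat : GrothendieckTopology C)
    (hJat : IsLeast
      {J : GrothendieckTopology C |
        ∀ (X : C) (S : Sieve X), (∃ (Y : C) (f : Y ⟶ X), S f) → S ∈ J X} Jat)
    (a b c : C) (ha : (⊥ : Sieve a) ∉ Jat a) (hb : (⊥ : Sieve b) ∉ Jat b)
    (hc : (⊥ : Sieve c) ∉ Jat c) (f : a ⟶ c) (g : b ⟶ c) :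
    ∃ d : C, (⊥ : Sieve d) ∉ Jat d ∧ ∃ (p : d ⟶ a) (q : d ⟶ b), p ≫ f = q ≫ g := by
  by_contra hcon
  push_neg at hcon
  -- the sieve on `c` generated by `f`
  let S : Sieve c :=
    { arrows := fun e m => ∃ k : e ⟶ a, m = k ≫ f
      downward_closed := by
        rintro e e' m ⟨k, rfl⟩ h
        exact ⟨h ≫ k, by simp⟩ }
  have hS : S ∈ Jat c := hJat.1 c S ⟨a, f, ⟨𝟙 a, (Category.id_comp f).symm⟩⟩
  have hT : S.pullback g ∈ Jat b := Jat.pullback_stable g hS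
  have hbot : (⊥ : Sieve b) ∈ Jat b := by
    refine Jat.transitive hT ⊥ ?_
    intro e h hh
    obtain ⟨k, hk⟩ := hh
    have he : (⊥ : Sieve e) ∈ Jat e := by
      by_contra he
      exact hcon e he k h hk.symm
    simpa using he
  exact hb hbot
end

section
/- Let C be a small category, J_at the smallest Grothendieck topology on C for which every nonempty sieve is covering, and C' the full subcategory of C on the objects c such that the empty sieve on c is not J_at-covering. Then for any object c of C' and any sieve R on c in C', R is nonempty if and only if the sieve on c in C generated by the morphisms of R (the pushforward of R along the full inclusion C' ⥤ C) is J_at-covering. In particular the topology induced on C' by J_at has as covering sieves exactly the nonempty sieves. -/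
open CategoryTheory CategoryTheory.Limits

universe u

/-- Let `Jat` be the smallest Grothendieck topology on `C` for which every
nonempty sieve is covering, and `C'` the full subcategory on the objects whose
empty sieve is not `Jat`-covering. A sieve `R` on an object of `C'` is nonempty
if and only if the sieve it generates in `C` is `Jat`-covering; i.e. the
topology induced on `C'` by `Jat` has exactly the nonempty sieves as covering
sieves. -/
theorem stmt6 {C : Type u} [SmallCategory C] (Jat : GrothendieckTopology C)
    (hJat : IsLeast
      {J : GrothendieckTopology C |
        ∀ (X : C) (S : Sieve X), (∃ (Y : C) (f : Y ⟶ X), S f) → S ∈ J X} Jat)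
    (c : ObjectProperty.FullSubcategory fun c : C => (⊥ : Sieve c) ∉ Jat c)
    (R : Sieve c) :
    (∃ (d : ObjectProperty.FullSubcategory fun c : C => (⊥ : Sieve c) ∉ Jat c) (f : d ⟶ c), R f) ↔
      R.functorPushforward (ObjectProperty.ι _) ∈ Jat c.obj := by
  constructor
  · rintro ⟨d, f, hf⟩
    refine hJat.1 _ _ ⟨d.obj, (ObjectProperty.ι _).map f, ?_⟩
    exact ⟨d, f, 𝟙 _, hf, by simp⟩
  · intro h
    by_contra hne
    have heq : R.functorPushforward (ObjectProperty.ι _) = ⊥ := by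
      ext Y g
      refine ⟨?_, fun h' => h'.elim⟩
      rintro ⟨Z, g', u, hg', -⟩
      exact absurd ⟨Z, g', hg'⟩ hne
    rw [heq] at h
    exact c.property h
end

section
/- Let C be a small category, J_at the smallest Grothendieck topology on C for which every nonempty sieve is covering, and C' the full subcategory of C on the objects c such that the empty sieve on c is not J_at-covering. Suppose J' is a Grothendieck topology on C' whose covering sieves on every object are exactly the nonempty sieves. Then the categories of sheaves of types Sh(C, J_at) and Sh(C', J') are equivalent. -/
open CategoryTheory CategoryTheory.Limits

universe u

section Aux

variable {C : Type u} [SmallCategory C] (Jat : GrothendieckTopology C)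

/-- Pulling back the empty sieve along any morphism gives the empty sieve, so
degeneracy propagates downward. -/
lemma aux_bot_down {Z W : C} (k : W ⟶ Z) (h : (⊥ : Sieve Z) ∈ Jat Z) :
    (⊥ : Sieve W) ∈ Jat W := by
  have := Jat.pullback_stable k h
  have e : (⊥ : Sieve Z).pullback k = (⊥ : Sieve W) := by
    ext Y f
    simp [Sieve.pullback_apply]
  rwa [e] at this

variable (hJat : IsLeast
      {J : GrothendieckTopology C |
        ∀ (X : C) (S : Sieve X), (∃ (Y : C) (f : Y ⟶ X), S f) → S ∈ J X} Jat)

include hJat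

lemma aux_nonempty_mem {X : C} {S : Sieve X} (h : ∃ (Y : C) (f : Y ⟶ X), S f) :
    S ∈ Jat X := hJat.1 X S h

/-- Degeneracy propagates upward along a morphism. -/
lemma aux_bot_up {Z X : C} (g : Z ⟶ X) (h : (⊥ : Sieve Z) ∈ Jat Z) :
    (⊥ : Sieve X) ∈ Jat X := by
  have hR : Sieve.generate (Presieve.singleton g) ∈ Jat X :=
    aux_nonempty_mem Jat hJat ⟨Z, g, ⟨Z, 𝟙 Z, g, Presieve.singleton.mk, Category.id_comp g⟩⟩
  refine Jat.transitive hR ⊥ ?_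
  rintro Y f ⟨W, l, g', hg', rfl⟩
  cases hg'
  have hY : (⊥ : Sieve Y) ∈ Jat Y := aux_bot_down Jat l h
  have e : (⊥ : Sieve X).pullback (l ≫ g) = (⊥ : Sieve Y) := by
    ext V u
    simp [Sieve.pullback_apply]
  rwa [e]

variable (J' : GrothendieckTopology (ObjectProperty.FullSubcategory fun c : C => (⊥ : Sieve c) ∉ Jat c))
    (hJ' : ∀ (c : ObjectProperty.FullSubcategory fun c : C => (⊥ : Sieve c) ∉ Jat c) (S : Sieve c),
      S ∈ J' c ↔ ∃ (d : ObjectProperty.FullSubcategory fun c : C => (⊥ : Sieve c) ∉ Jat c) (f : d ⟶ c), S f)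

include hJ'

/-- Characterization of `Jat` on nondegenerate objects: exactly the nonempty sieves. -/
lemma aux_mem_iff {X : C} (hX : (⊥ : Sieve X) ∉ Jat X) (S : Sieve X) :
    S ∈ Jat X ↔ ∃ (Y : C) (f : Y ⟶ X), S f := by
  constructor
  · intro hS
    -- construct the candidate topology J0 and use minimality
    let J0 : GrothendieckTopology C :=
      { sieves := fun X => {S | (⊥ : Sieve X) ∈ Jat X ∨ ∃ (Y : C) (f : Y ⟶ X), S f}
        top_mem' := fun X => Or.inr ⟨X, 𝟙 X, trivial⟩
        pullback_stable' := by
          intro X Y S f hS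
          by_cases hY : (⊥ : Sieve Y) ∈ Jat Y
          · exact Or.inl hY
          · have hX' : (⊥ : Sieve X) ∉ Jat X := fun h => hY (aux_bot_down Jat f h)
            rcases hS.resolve_left hX' with ⟨Z, g, hg⟩
            have hZ : (⊥ : Sieve Z) ∉ Jat Z := fun h => hX' (aux_bot_up Jat hJat g h)
            -- work in the full subcategory
            let X' : ObjectProperty.FullSubcategory fun c : C => (⊥ : Sieve c) ∉ Jat c := ⟨X, hX'⟩
            let Y' : ObjectProperty.FullSubcategory fun c : C => (⊥ : Sieve c) ∉ Jat c := ⟨Y, hY⟩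
            let Z' : ObjectProperty.FullSubcategory fun c : C => (⊥ : Sieve c) ∉ Jat c := ⟨Z, hZ⟩
            let g' : Z' ⟶ X' := ObjectProperty.homMk g
            let f' : Y' ⟶ X' := ObjectProperty.homMk f
            have hS0 : Sieve.functorPullback
                (ObjectProperty.ι fun c : C => (⊥ : Sieve c) ∉ Jat c) (X := X') S
                ∈ J' X' := (hJ' X' _).mpr ⟨Z', g', hg⟩
            have hTp := J'.pullback_stable f' hS0
            rcases (hJ' Y' _).mp hTp with ⟨d, h, hh⟩
            exact Or.inr ⟨d.obj, h.hom, hh⟩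
        transitive' := by
          intro X S hS R hR
          by_cases hX' : (⊥ : Sieve X) ∈ Jat X
          · exact Or.inl hX'
          · rcases hS.resolve_left hX' with ⟨Z, g, hg⟩
            have hZ : (⊥ : Sieve Z) ∉ Jat Z := fun h => hX' (aux_bot_up Jat hJat g h)
            rcases (hR hg).resolve_left hZ with ⟨W, k, hk⟩
            exact Or.inr ⟨W, k ≫ g, hk⟩ }
    have hle : Jat ≤ J0 := hJat.2 (fun X S h => Or.inr h)
    exact (hle X hS).resolve_left hX
  · exact fun h => aux_nonempty_mem Jat hJat h

end Aux

/-- Let `Jat` be the smallest Grothendieck topology on `C` for which every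
nonempty sieve is covering, `C'` the full subcategory on the objects whose empty
sieve is not `Jat`-covering, and `J'` a Grothendieck topology on `C'` whose
covering sieves are exactly the nonempty ones. Then `Sh(C, Jat) ≌ Sh(C', J')`. -/
theorem stmt7 {C : Type u} [SmallCategory C] (Jat : GrothendieckTopology C)
    (hJat : IsLeast
      {J : GrothendieckTopology C |
        ∀ (X : C) (S : Sieve X), (∃ (Y : C) (f : Y ⟶ X), S f) → S ∈ J X} Jat)
    (J' : GrothendieckTopology (ObjectProperty.FullSubcategory fun c : C => (⊥ : Sieve c) ∉ Jat c))
    (hJ' : ∀ (c : ObjectProperty.FullSubcategory fun c : C => (⊥ : Sieve c) ∉ Jat c) (S : Sieve c),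
      S ∈ J' c ↔ ∃ (d : ObjectProperty.FullSubcategory fun c : C => (⊥ : Sieve c) ∉ Jat c) (f : d ⟶ c), S f) :
    Nonempty (Sheaf Jat (Type u) ≌ Sheaf J' (Type u)) := by
  let G := ObjectProperty.ι fun c : C => (⊥ : Sieve c) ∉ Jat c
  have hcd : G.IsCoverDense Jat := by
    constructor
    intro X
    by_cases hX : (⊥ : Sieve X) ∈ Jat X
    · exact Jat.superset_covering bot_le hX
    · refine aux_nonempty_mem Jat hJat ⟨X, 𝟙 X, ?_⟩
      exact Presieve.in_coverByImage G (𝟙 (G.obj ⟨X, hX⟩))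
  have : G.IsDenseSubsite J' Jat := by
    constructor
    case isCoverDense' => exact hcd
    case isLocallyFull' => infer_instance
    case isLocallyFaithful' => infer_instance
    case functorPushforward_mem_iff =>
      intro X S
      constructor
      · intro h
        rcases (aux_mem_iff Jat hJat J' hJ' X.property _).mp h with ⟨Y, f, Z, g, l, hg, _⟩
        exact (hJ' X S).mpr ⟨Z, g, hg⟩
      · intro h
        rcases (hJ' X S).mp h with ⟨d, f, hf⟩
        refine aux_nonempty_mem Jat hJat ⟨d.obj, f.hom, ?_⟩
        exact ⟨d, f, 𝟙 d.obj, hf, (Category.id_comp _).symm⟩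
  exact ⟨(Functor.IsDenseSubsite.sheafEquiv (G := G) (J := J') (K := Jat) (A := Type u)).symm⟩
end

section
/- Let C be a small category and J_at the smallest Grothendieck topology on C for which every nonempty sieve is covering. Then for every morphism f : a ⟶ b in C, the empty sieve on a is J_at-covering if and only if the empty sieve on b is J_at-covering. -/
open CategoryTheory CategoryTheory.Limits

universe u

/-- Let `Jat` be the smallest Grothendieck topology on `C` for which every
nonempty sieve is covering. For any morphism `f : a ⟶ b`, the empty sieve on `a`
is `Jat`-covering if and only if the empty sieve on `b` is `Jat`-covering. -/
theorem stmt8 {C : Type u} [SmallCategory C] (Jat : GrothendieckTopology C)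
    (hJat : IsLeast
      {J : GrothendieckTopology C |
        ∀ (X : C) (S : Sieve X), (∃ (Y : C) (f : Y ⟶ X), S f) → S ∈ J X} Jat)
    {a b : C} (f : a ⟶ b) :
    (⊥ : Sieve a) ∈ Jat a ↔ (⊥ : Sieve b) ∈ Jat b := by
  constructor
  · intro h
    have hgen : Sieve.generate (Presieve.singleton f) ∈ Jat b :=
      hJat.1 b _ ⟨a, f, ⟨a, 𝟙 a, f, Presieve.singleton.mk, by simp⟩⟩
    apply Jat.transitive hgen
    rintro Y g ⟨Z, h', l, hl, rfl⟩
    cases hl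
    have := Jat.pullback_stable h' h
    simpa using this
  · intro h
    have := Jat.pullback_stable f h
    simpa using this
end

section
/- Let C be a small category, J a Grothendieck topology on C, and L a separating set of presheaves in [Cᵒᵖ, Type] such that for every monomorphism m : a ⟶ b of presheaves with a not initial and b ∈ L, the sheafification a_J(m) is an isomorphism in Sh(C,J). Then for every b ∈ L the sheaf a_J(b) is either an initial object of Sh(C,J) or an atom of Sh(C,J), and the set { a_J(b) : b ∈ L } is a separating set of objects of Sh(C,J). -/
open CategoryTheory CategoryTheory.Limits

universe u

lemma isIso_fst_of_isIso_snd' {E : Type*} [Category E] {P X Y Z : E}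
    {fst : P ⟶ X} {snd : P ⟶ Y} {f : X ⟶ Z} {g : Y ⟶ Z}
    (h : IsPullback fst snd f g) [IsIso g] : IsIso fst := by
  have h' : IsPullback (𝟙 X) (f ≫ inv g) f g :=
    IsPullback.of_horiz_isIso ⟨by simp⟩
  have e := h.isoIsPullback_hom_fst _ _ h'
  rw [Category.comp_id] at e
  rw [← e]
  infer_instance

/-- If `L` is a separating set of presheaves such that every monomorphism with
non-initial domain into a member of `L` becomes an isomorphism after
`J`-sheafification, then the sheafifications of members of `L` are initial or
atoms, and they form a separating set of `Sh(C,J)`. -/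
theorem stmt9 {C : Type u} [SmallCategory C] (J : GrothendieckTopology C)
    (L : Set (Cᵒᵖ ⥤ Type u)) (hsep : ObjectProperty.IsSeparating L)
    (hdense : ∀ (a b : Cᵒᵖ ⥤ Type u) (m : a ⟶ b), Mono m →
      ¬ Nonempty (IsInitial a) → b ∈ L → IsIso ((presheafToSheaf J (Type u)).map m)) :
    (∀ b ∈ L, Nonempty (IsInitial ((presheafToSheaf J (Type u)).obj b)) ∨
      IsAtomObj ((presheafToSheaf J (Type u)).obj b)) ∧
    ObjectProperty.IsSeparating ((presheafToSheaf J (Type u)).obj '' L) := by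
  set F := presheafToSheaf J (Type u) with hF
  set G := sheafToPresheaf J (Type u) with hG
  have adj : F ⊣ G := sheafificationAdjunction J (Type u)
  have hFcolim : PreservesColimitsOfSize.{u, u} F := adj.leftAdjoint_preservesColimits
  constructor
  · intro b hb
    by_cases hA : Nonempty (IsInitial (F.obj b))
    · exact Or.inl hA
    · refine Or.inr ⟨hA, fun S m hm => ?_⟩
      -- pull back `m.val` along the unit
      have hmval : Mono m.hom := by
        have : Mono m := hm
        infer_instance
      let m' : G.obj S ⟶ G.obj (F.obj b) := G.map m
      have hm' : Mono m' := hmval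
      let η : b ⟶ G.obj (F.obj b) := adj.unit.app b
      -- sheafification of the unit is an isomorphism
      have hη : IsIso (F.map η) := by
        have tri := adj.left_triangle_components b
        have : IsIso (adj.counit.app (F.obj b)) := inferInstance
        exact IsIso.of_isIso_fac_right tri
      let P := pullback m' η
      have hP : IsPullback (pullback.fst m' η) (pullback.snd m' η) m' η :=
        IsPullback.of_hasPullback m' η
      have hPmap : IsPullback (F.map (pullback.fst m' η)) (F.map (pullback.snd m' η))
          (F.map m') (F.map η) := hP.map F
      have hfst : IsIso (F.map (pullback.fst m' η)) := isIso_fst_of_isIso_snd' hPmap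
      by_cases hPinit : Nonempty (IsInitial P)
      · -- S is initial
        right
        obtain ⟨hPi⟩ := hPinit
        have h1 : IsInitial (F.obj P) := hPi.isInitialObj F
        have : IsIso (adj.counit.app S) := inferInstance
        refine ⟨h1.ofIso ?_⟩
        exact asIso (F.map (pullback.fst m' η)) ≪≫ asIso (adj.counit.app S)
      · -- m is an isomorphism
        left
        have hsnd : IsIso (F.map (pullback.snd m' η)) :=
          hdense P b (pullback.snd m' η) inferInstance hPinit hb
        have hw : F.map (pullback.fst m' η) ≫ F.map m' =
            F.map (pullback.snd m' η) ≫ F.map η := hPmap.w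
        have hFm' : IsIso (F.map m') := by
          have : F.map m' = inv (F.map (pullback.fst m' η)) ≫
              F.map (pullback.snd m' η) ≫ F.map η := by
            rw [← hw, IsIso.inv_hom_id_assoc]
          rw [this]
          infer_instance
        -- counit naturality
        have hnat : F.map m' ≫ adj.counit.app (F.obj b) = adj.counit.app S ≫ m :=
          adj.counit.naturality m
        have : IsIso (adj.counit.app S) := inferInstance
        have : m = inv (adj.counit.app S) ≫ F.map m' ≫ adj.counit.app (F.obj b) := by
          rw [hnat, IsIso.inv_hom_id_assoc]
        rw [this]
        infer_instance
  · intro X Y f g h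
    ext1
    apply hsep
    intro b hb k
    have h' := h (F.obj b) ⟨b, hb, rfl⟩ ((adj.homEquiv b X).symm k)
    have e1 : (adj.homEquiv b Y) ((adj.homEquiv b X).symm k ≫ f) = k ≫ f.hom := by
      rw [adj.homEquiv_naturality_right, Equiv.apply_symm_apply]
      rfl
    have e2 : (adj.homEquiv b Y) ((adj.homEquiv b X).symm k ≫ g) = k ≫ g.hom := by
      rw [adj.homEquiv_naturality_right, Equiv.apply_symm_apply]
      rfl
    rw [← e1, ← e2, h']
end

section
/- Let C be a small category and J a Grothendieck topology on C such that every nonempty sieve on every object of C is J-covering. Then for every object c of C, the sheafification a_J(y(c)) of the representable presheaf y(c) = Hom_C(−, c) is either an initial object of Sh(C,J) or an atom of Sh(C,J). -/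
open CategoryTheory CategoryTheory.Limits

universe u

open Opposite

section Aux

variable {C : Type u} [SmallCategory C] (J : GrothendieckTopology C)

/-- If the empty sieve covers `X`, then a sheaf has exactly one section over `X`. -/
lemma aux_sheaf_bot_existsUnique {G : Cᵒᵖ ⥤ Type u} (hG : CategoryTheory.Presieve.IsSheaf J G)
    {X : C} (h : (⊥ : Sieve X) ∈ J X) :
    ∃! _t : G.obj (op X), True := by
  obtain ⟨t, -, ht⟩ := hG ⊥ h (fun Y f hf => False.elim hf)
    (fun {Y₁ Y₂ Z} g₁ g₂ {f₁ f₂} h₁ h₂ _ => False.elim h₁)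
  exact ⟨t, trivial, fun b _ => ht b (fun Y f hf => False.elim hf)⟩

lemma aux_sheaf_bot_subsingleton {G : Cᵒᵖ ⥤ Type u}
    (hG : CategoryTheory.Presieve.IsSheaf J G) {X : C} (h : (⊥ : Sieve X) ∈ J X)
    (a b : G.obj (op X)) : a = b := by
  obtain ⟨t, -, ht⟩ := aux_sheaf_bot_existsUnique J hG h
  rw [ht a trivial, ht b trivial]

/-- Main lemma: any mono into the sheafification of a representable is an iso or
has initial domain, provided every nonempty sieve is covering. -/
lemma aux_mono_clause {C : Type u} [SmallCategory C] (J : GrothendieckTopology C)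
    (hJ : ∀ (X : C) (S : Sieve X), (∃ (Y : C) (f : Y ⟶ X), S f) → S ∈ J X)
    (c : C) ⦃S : Sheaf J (Type u)⦄
    (m : S ⟶ (presheafToSheaf J (Type u)).obj (yoneda.obj c)) (hm : Mono m) :
    IsIso m ∨ Nonempty (IsInitial S) := by
  classical
  let η := CategoryTheory.toSheafify J (yoneda.obj c)
  have hmv : Mono m.hom := (Sheaf.Hom.mono_iff_presheaf_mono J (Type u) m).1 hm
  have hinj : ∀ X : Cᵒᵖ, Function.Injective (m.hom.app X) := fun X =>
    (CategoryTheory.mono_iff_injective _).1 ((NatTrans.mono_iff_mono_app m.hom).1 hmv X)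
  have hS := (CategoryTheory.isSheaf_iff_isSheaf_of_type J S.val).1 S.cond
  have hFs := (CategoryTheory.isSheaf_iff_isSheaf_of_type J
    ((presheafToSheaf J (Type u)).obj (yoneda.obj c)).val).1
    ((presheafToSheaf J (Type u)).obj (yoneda.obj c)).cond
  by_cases hc : ∃ (Y : C) (g : Y ⟶ c) (t : S.val.obj (op Y)),
      m.hom.app (op Y) t = η.app (op Y) g
  · -- the image of `m` meets the unit somewhere: `m` is an isomorphism
    left
    obtain ⟨Y, g, t, ht⟩ := hc
    let x := η.app (op c) (𝟙 c)
    have hηx : ∀ {Z : C} (k : Z ⟶ c),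
        ((presheafToSheaf J (Type u)).obj (yoneda.obj c)).val.map k.op x
          = η.app (op Z) k := by
      intro Z k
      have := NatTrans.naturality_apply η k.op (𝟙 c)
      simp only [yoneda_obj_map, unop_op, Category.comp_id] at this
      simpa using this.symm
    let W : Sieve c := CategoryTheory.Presheaf.imageSieve m.hom x
    have hgW : W g := ⟨t, ht.trans (hηx g).symm⟩
    have hW : W ∈ J c := hJ c W ⟨Y, g, hgW⟩
    -- the compatible family of local preimages
    let fam : Presieve.FamilyOfElements S.val (W : Presieve c) :=
      fun Z f hf => CategoryTheory.Presheaf.localPreimage m.hom x f hf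
    have hfam : fam.Compatible := by
      intro Z₁ Z₂ Z g₁ g₂ f₁ f₂ h₁ h₂ hcomm
      apply hinj (op Z)
      have n1 := NatTrans.naturality_apply m.hom g₁.op (fam f₁ h₁)
      have n2 := NatTrans.naturality_apply m.hom g₂.op (fam f₂ h₂)
      rw [n1, n2]
      have e1 : m.hom.app (op Z₁) (fam f₁ h₁)
          = ((presheafToSheaf J (Type u)).obj (yoneda.obj c)).val.map f₁.op x :=
        CategoryTheory.Presheaf.app_localPreimage m.hom x f₁ h₁
      have e2 : m.hom.app (op Z₂) (fam f₂ h₂)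
          = ((presheafToSheaf J (Type u)).obj (yoneda.obj c)).val.map f₂.op x :=
        CategoryTheory.Presheaf.app_localPreimage m.hom x f₂ h₂
      rw [e1, e2, ← FunctorToTypes.map_comp_apply, ← FunctorToTypes.map_comp_apply,
        ← op_comp, ← op_comp, hcomm]
    obtain ⟨t₀, ht₀, -⟩ := hS W hW fam hfam
    have hmx : m.hom.app (op c) t₀ = x := by
      apply (hFs W hW).isSeparatedFor.ext
      intro Z f hf
      have := NatTrans.naturality_apply m.hom f.op t₀
      rw [← this, ht₀ f hf]
      exact CategoryTheory.Presheaf.app_localPreimage m.hom x f hf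
    -- the resulting splitting of `m`
    let ψ : yoneda.obj c ⟶ S.val := yonedaEquiv.symm t₀
    have hψ : ψ ≫ m.hom = η := by
      apply yonedaEquiv.injective
      rw [yonedaEquiv_comp, Equiv.apply_symm_apply, hmx]
      exact (yonedaEquiv_apply η).symm
    let φ : (presheafToSheaf J (Type u)).obj (yoneda.obj c) ⟶ S := ⟨CategoryTheory.sheafifyLift J ψ S.cond⟩
    have hφm : φ ≫ m = 𝟙 ((presheafToSheaf J (Type u)).obj (yoneda.obj c)) := by
      apply Sheaf.hom_ext
      apply CategoryTheory.sheafify_hom_ext J _ _ ((presheafToSheaf J (Type u)).obj (yoneda.obj c)).cond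
      rw [InducedCategory.comp_hom, InducedCategory.id_hom,
        Category.comp_id]
      show CategoryTheory.toSheafify J (yoneda.obj c)
          ≫ CategoryTheory.sheafifyLift J ψ S.cond ≫ m.hom
        = CategoryTheory.toSheafify J (yoneda.obj c)
      rw [← Category.assoc, CategoryTheory.toSheafify_sheafifyLift, hψ]
    haveI : IsSplitEpi m := ⟨⟨⟨φ, hφm⟩⟩⟩
    exact isIso_of_mono_of_isSplitEpi m
  · -- the image of `m` misses the unit everywhere: `S` is initial
    right
    have hbot : ∀ (X : C), S.val.obj (op X) → (⊥ : Sieve X) ∈ J X := by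
      intro X t
      have hR : CategoryTheory.Presheaf.imageSieve η (m.hom.app (op X) t) ∈ J X :=
        CategoryTheory.Presheaf.IsLocallySurjective.imageSieve_mem _
      have hRbot : CategoryTheory.Presheaf.imageSieve η (m.hom.app (op X) t)
          = (⊥ : Sieve X) := by
        apply Sieve.ext
        intro Z f
        constructor
        · rintro ⟨g, hg⟩
          exfalso
          apply hc
          refine ⟨Z, g, S.val.map f.op t, ?_⟩
          exact (NatTrans.naturality_apply m.hom f.op t).trans hg.symm
        · intro hf
          exact False.elim hf
      rwa [hRbot] at hR
    -- construct the initiality structure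
    refine ⟨IsInitial.ofUniqueHom (fun G => ?_) (fun G f => ?_)⟩
    · refine ⟨⟨fun X => TypeCat.ofHom (fun t => ?_), ?_⟩⟩
      · exact (aux_sheaf_bot_existsUnique J
          ((CategoryTheory.isSheaf_iff_isSheaf_of_type J G.val).1 G.cond)
          (hbot X.unop t)).choose
      · intro X Y f
        ext t
        exact aux_sheaf_bot_subsingleton J
          ((CategoryTheory.isSheaf_iff_isSheaf_of_type J G.val).1 G.cond)
          (hbot Y.unop (S.val.map f t)) _ _
    · apply Sheaf.hom_ext
      apply NatTrans.ext
      funext X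
      ext t
      exact aux_sheaf_bot_subsingleton J
        ((CategoryTheory.isSheaf_iff_isSheaf_of_type J G.val).1 G.cond)
        (hbot X.unop t) _ _

end Aux

/-- If every nonempty sieve is `J`-covering, then the sheafification of every
representable presheaf is either initial or an atom of `Sh(C,J)`. -/
theorem stmt10 {C : Type u} [SmallCategory C] (J : GrothendieckTopology C)
    (hJ : ∀ (X : C) (S : Sieve X), (∃ (Y : C) (f : Y ⟶ X), S f) → S ∈ J X)
    (c : C) :
    Nonempty (IsInitial ((presheafToSheaf J (Type u)).obj (yoneda.obj c))) ∨
      IsAtomObj ((presheafToSheaf J (Type u)).obj (yoneda.obj c)) := by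
  by_cases hF : Nonempty (IsInitial ((presheafToSheaf J (Type u)).obj (yoneda.obj c)))
  · exact Or.inl hF
  · exact Or.inr ⟨hF, fun S m hm => aux_mono_clause J hJ c m hm⟩
end

section
/- Let C be a small category satisfying the right Ore condition and let J_at be a Grothendieck topology on C whose covering sieves on every object are exactly the nonempty sieves. Then for every object c of C, the sheafification a_{J_at}(y(c)) of the representable presheaf y(c) = Hom_C(−, c) is an atom of Sh(C, J_at). -/
open CategoryTheory CategoryTheory.Limits

universe u

/-- If `C` satisfies the right Ore condition and `Jat` is the topology whose
covering sieves are exactly the nonempty ones, then the sheafification of every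
representable is an atom of `Sh(C, Jat)`. -/
theorem stmt13 {C : Type u} [SmallCategory C]
    (hOre : ∀ {a b c : C} (f : a ⟶ c) (g : b ⟶ c),
      ∃ (d : C) (p : d ⟶ a) (q : d ⟶ b), p ≫ f = q ≫ g)
    (Jat : GrothendieckTopology C)
    (hJat : ∀ (X : C) (S : Sieve X), S ∈ Jat X ↔ ∃ (Y : C) (f : Y ⟶ X), S f)
    (c : C) :
    IsAtomObj ((presheafToSheaf Jat (Type u)).obj (yoneda.obj c)) := by
  classical
  set A := (presheafToSheaf Jat (Type u)).obj (yoneda.obj c) with hA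
  let η : yoneda.obj c ⟶ A.val := toSheafify Jat (yoneda.obj c)
  have hηls : Presheaf.IsLocallySurjective Jat η := inferInstance
  -- The constant `PEmpty` presheaf is a sheaf for `Jat`.
  let F : Cᵒᵖ ⥤ Type u := (Functor.const Cᵒᵖ).obj PEmpty
  have hF : Presheaf.IsSheaf Jat F := by
    rw [isSheaf_iff_isSheaf_of_type]
    intro X Sv hSv x hx
    obtain ⟨Y, f, hf⟩ := (hJat X Sv).1 hSv
    exact (x f hf).elim
  constructor
  · rintro ⟨I⟩
    let φ : A ⟶ ⟨F, hF⟩ := I.to _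
    exact ((η ≫ φ.hom).app (Opposite.op c) (𝟙 c)).elim
  · intro S m hm
    have hmv : Mono m.hom := (Sheaf.Hom.mono_iff_presheaf_mono _ _ m).1 hm
    have hinj : ∀ (X : Cᵒᵖ), Function.Injective (m.hom.app X) := by
      intro X
      rw [← CategoryTheory.mono_iff_injective]
      exact (NatTrans.mono_iff_mono_app m.hom).1 hmv X
    by_cases hS : ∀ (X : Cᵒᵖ), IsEmpty (S.val.obj X)
    · -- `S` is initial.
      right
      refine ⟨IsInitial.ofUniqueHom (fun G => ⟨⟨fun X => TypeCat.ofHom (fun x => ((hS X).false x).elim), ?_⟩⟩) ?_⟩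
      · intro X Y f
        ext x
        exact ((hS X).false x).elim
      · intro G ψ
        apply Sheaf.hom_ext
        ext X x
        exact ((hS X).false x).elim
    · -- `m` is locally surjective, hence an isomorphism.
      left
      push_neg at hS
      obtain ⟨Xb, hXb⟩ := hS
      obtain ⟨s0⟩ := hXb
      -- localize `m.hom.app _ s0` to a representable element
      obtain ⟨b', f0, g0, hg0⟩ : ∃ (b' : C) (f0 : b' ⟶ Xb.unop) (g0 : b' ⟶ c),
          η.app (Opposite.op b') g0 = A.val.map f0.op (m.hom.app Xb s0) := by
        have := hηls.imageSieve_mem (F := yoneda.obj c) (f := η) (m.hom.app Xb s0)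
        obtain ⟨Y, f, t, ht⟩ := (hJat _ _).1 this
        exact ⟨Y, f, t, ht⟩
      have hls : Presheaf.IsLocallySurjective Jat m.hom := by
        constructor
        intro U x
        rw [hJat]
        -- localize `x` to a representable element
        have := hηls.imageSieve_mem (F := yoneda.obj c) (f := η) x
        obtain ⟨e, f, t, ht⟩ := (hJat _ _).1 this
        obtain ⟨d', p, q, hpq⟩ := hOre t g0
        refine ⟨d', p ≫ f, S.val.map q.op (S.val.map f0.op s0), ?_⟩
        have h1 : m.hom.app _ (S.val.map q.op (S.val.map f0.op s0))
            = A.val.map q.op (m.hom.app _ (S.val.map f0.op s0)) :=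
          ConcreteCategory.congr_hom (m.hom.naturality q.op) (S.val.map f0.op s0)
        have h2 : m.hom.app _ (S.val.map f0.op s0)
            = A.val.map f0.op (m.hom.app Xb s0) :=
          ConcreteCategory.congr_hom (m.hom.naturality f0.op) s0
        have h3 : A.val.map q.op (η.app (Opposite.op b') g0)
            = η.app (Opposite.op d') (q ≫ g0) :=
          (ConcreteCategory.congr_hom (η.naturality q.op) g0).symm
        have h4 : A.val.map p.op (η.app (Opposite.op e) t)
            = η.app (Opposite.op d') (p ≫ t) :=
          (ConcreteCategory.congr_hom (η.naturality p.op) t).symm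
        have h5 : A.val.map p.op (A.val.map f.op x) = A.val.map (p ≫ f).op x := by
          rw [op_comp, FunctorToTypes.map_comp_apply]
        calc m.hom.app _ (S.val.map q.op (S.val.map f0.op s0))
            = A.val.map q.op (η.app (Opposite.op b') g0) := by rw [h1, h2, hg0]
          _ = η.app (Opposite.op d') (p ≫ t) := by rw [h3, hpq]
          _ = A.val.map p.op (A.val.map f.op x) := by rw [← h4]; exact congrArg _ ht
          _ = A.val.map (p ≫ f).op x := h5
      have hli : Presheaf.IsLocallyInjective Jat m.hom :=
        Presheaf.isLocallyInjective_of_injective Jat m.hom hinj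
      have : Sheaf.IsLocallySurjective m := hls
      have : Sheaf.IsLocallyInjective m := hli
      exact (Sheaf.isLocallyBijective_iff_isIso m).1 ⟨‹_›, ‹_›⟩
end

section
/- Let C be a small category satisfying the right Ore condition and let J_at be a Grothendieck topology on C whose covering sieves on every object are exactly the nonempty sieves. Then a J_at-sheaf F is an atom of Sh(C, J_at) if and only if there exist an object c of C and an epimorphism a_{J_at}(y(c)) ⟶ F in Sh(C, J_at), where y(c) is the representable presheaf on c. -/
open CategoryTheory CategoryTheory.Limits Opposite

universe u

namespace Stmt14Aux

variable {C : Type u} [SmallCategory C] (Jat : GrothendieckTopology C)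

/-- The constant `PEmpty` presheaf is a sheaf whenever all covering sieves are nonempty. -/
lemma emptySheaf_cond
    (hJat : ∀ (X : C) (S : Sieve X), S ∈ Jat X ↔ ∃ (Y : C) (f : Y ⟶ X), S f) :
    Presheaf.IsSheaf Jat ((Functor.const Cᵒᵖ).obj (PEmpty.{u + 1} : Type u)) := by
  rw [isSheaf_iff_isSheaf_of_type]
  intro X S hS x _
  obtain ⟨Y, f, hf⟩ := (hJat X S).1 hS
  exact (x f hf).elim

/-- The empty sheaf for an "atomic" topology. -/
noncomputable def emptySheaf
    (hJat : ∀ (X : C) (S : Sieve X), S ∈ Jat X ↔ ∃ (Y : C) (f : Y ⟶ X), S f) :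
    Sheaf Jat (Type u) :=
  ⟨_, emptySheaf_cond Jat hJat⟩

/-- An initial sheaf has empty sections. -/
lemma sections_empty_of_initial
    (hJat : ∀ (X : C) (S : Sieve X), S ∈ Jat X ↔ ∃ (Y : C) (f : Y ⟶ X), S f)
    {A : Sheaf Jat (Type u)} (hA : IsInitial A) (X : Cᵒᵖ) (x : A.val.obj X) : False :=
  ((hA.to (emptySheaf Jat hJat)).hom.app X x).elim

/-- A sheaf with empty sections is initial. -/
noncomputable def initialOfEmpty {A : Sheaf Jat (Type u)}
    (h : ∀ X : Cᵒᵖ, ¬ Nonempty (A.val.obj X)) : IsInitial A :=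
  IsInitial.ofUniqueHom
    (fun G => ⟨{ app := fun X => TypeCat.ofHom fun x => absurd ⟨x⟩ (h X)
                 naturality := fun X Y f => by
                   ext x
                   exact absurd ⟨x⟩ (h X) }⟩)
    (fun G m => by
      apply Sheaf.hom_ext
      ext X x
      exact absurd ⟨x⟩ (h X))

end Stmt14Aux

open Stmt14Aux

/-- If `C` satisfies the right Ore condition and `Jat` is the topology whose
covering sieves are exactly the nonempty ones, then a sheaf `F` is an atom of
`Sh(C, Jat)` if and only if it is an epimorphic image of the sheafification of
some representable. -/
theorem stmt14 {C : Type u} [SmallCategory C]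
    (hOre : ∀ {a b c : C} (f : a ⟶ c) (g : b ⟶ c),
      ∃ (d : C) (p : d ⟶ a) (q : d ⟶ b), p ≫ f = q ≫ g)
    (Jat : GrothendieckTopology C)
    (hJat : ∀ (X : C) (S : Sieve X), S ∈ Jat X ↔ ∃ (Y : C) (f : Y ⟶ X), S f)
    (F : Sheaf Jat (Type u)) :
    IsAtomObj F ↔
      ∃ (c : C) (e : (presheafToSheaf Jat (Type u)).obj (yoneda.obj c) ⟶ F), Epi e := by
  constructor
  · rintro ⟨hni, hatom⟩
    -- `F` is not initial, hence has a section somewhere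
    by_cases hc : ∀ X : Cᵒᵖ, ¬ Nonempty (F.val.obj X)
    · exact absurd ⟨initialOfEmpty Jat hc⟩ hni
    push_neg at hc
    obtain ⟨X, ⟨u⟩⟩ := hc
    let c : C := X.unop
    have u' : F.val.obj (op c) := u
    let φ : yoneda.obj c ⟶ F.val := yonedaEquiv.symm u'
    have hφ : φ.app (op c) (𝟙 c) = u' := by
      have h1 := yonedaEquiv.apply_symm_apply u'
      rwa [yonedaEquiv_apply] at h1
    refine ⟨c, ⟨sheafifyLift Jat φ F.cond⟩, ?_⟩
    set e : (presheafToSheaf Jat (Type u)).obj (yoneda.obj c) ⟶ F :=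
      ⟨sheafifyLift Jat φ F.cond⟩ with he
    have hfac : toSheafify Jat (yoneda.obj c) ≫ e.hom = φ :=
      toSheafify_sheafifyLift Jat φ F.cond
    -- factor through the image sheaf and use atomicity
    rcases hatom (Sheaf.imageι e) inferInstance with hiso | hinit
    · rw [← Sheaf.toImage_ι e]
      exact epi_comp _ _
    · -- the image sheaf has a nonempty section at `c`, contradiction
      exfalso
      refine sections_empty_of_initial Jat hJat hinit.some (op c) ?_
      refine ⟨u', ?_⟩
      apply (Subfunctor.range e.hom).le_sheafify Jat
      refine ⟨(toSheafify Jat (yoneda.obj c)).app (op c) (𝟙 c), ?_⟩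
      have h2 := congrArg (fun (ψ : yoneda.obj c ⟶ F.val) => ψ.app (op c) (𝟙 c)) hfac
      exact h2.trans hφ
  · rintro ⟨c, e, he⟩
    -- the generating section
    set t₀ : ((presheafToSheaf Jat (Type u)).obj (yoneda.obj c)).val.obj (op c) :=
      (toSheafify Jat (yoneda.obj c)).app (op c) (𝟙 c) with ht₀
    set u : F.val.obj (op c) := e.hom.app (op c) t₀ with hu
    -- every section of `F` is locally a translate of `u`
    have hegen : ∀ (X : C) (x : F.val.obj (op X)),
        ∃ (Z : C) (g : Z ⟶ X) (h : Z ⟶ c),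
          F.val.map g.op x = F.val.map h.op u := by
      intro X x
      have hls : Presheaf.IsLocallySurjective Jat e.hom :=
        (Sheaf.isLocallySurjective_iff_epi e).2 he
      have hψ : Presheaf.IsLocallySurjective Jat
          (toSheafify Jat (yoneda.obj c) ≫ e.hom) :=
        Presheaf.isLocallySurjective_comp Jat _ _
      obtain ⟨Z, g, hg⟩ := (hJat X _).1
        (Presheaf.IsLocallySurjective.imageSieve_mem
          (f := toSheafify Jat (yoneda.obj c) ≫ e.hom) (J := Jat) (A := Type u) (FA := TypeCat.Fun) (CA := fun X => X) x)
      obtain ⟨t, ht⟩ := hg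
      refine ⟨Z, g, t, ?_⟩
      have hnat := CategoryTheory.congr_fun ((toSheafify Jat (yoneda.obj c) ≫ e.hom).naturality t.op) (𝟙 c)
      dsimp at hnat
      rw [Category.comp_id] at hnat
      exact ht.symm.trans hnat
    constructor
    · -- `F` is not initial since `u` is a section
      rintro ⟨hinit⟩
      exact sections_empty_of_initial Jat hJat hinit (op c) u
    · intro S m hm
      by_cases hS : ∀ X : Cᵒᵖ, ¬ Nonempty (S.val.obj X)
      · exact Or.inr ⟨initialOfEmpty Jat hS⟩
      · left
        push_neg at hS
        obtain ⟨D, ⟨s⟩⟩ := hS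
        -- a translate of `u` lies in the image of `m`
        obtain ⟨Z₀, k, h₀, hk⟩ := hegen D.unop (m.hom.app D s)
        have him : m.hom.app (op Z₀) (S.val.map k.op s) = F.val.map h₀.op u := by
          rw [← hk]
          exact FunctorToTypes.naturality m.hom k.op s
        -- `m` is locally surjective
        have hml : Presheaf.IsLocallySurjective Jat m.hom := by
          constructor
          intro X x
          rw [hJat]
          obtain ⟨Z, g, h, hx⟩ := hegen X x
          obtain ⟨W, p, q, hpq⟩ := hOre h h₀
          refine ⟨W, p ≫ g, S.val.map q.op (S.val.map k.op s), ?_⟩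
          calc m.hom.app (op W) (S.val.map q.op (S.val.map k.op s))
              = F.val.map q.op (m.hom.app (op Z₀) (S.val.map k.op s)) :=
                FunctorToTypes.naturality m.hom q.op _
            _ = F.val.map q.op (F.val.map h₀.op u) := by rw [him]
            _ = F.val.map (q ≫ h₀).op u := by
                rw [op_comp, FunctorToTypes.map_comp_apply]
            _ = F.val.map (p ≫ h).op u := by rw [hpq]
            _ = F.val.map p.op (F.val.map h.op u) := by
                rw [op_comp, FunctorToTypes.map_comp_apply]
            _ = F.val.map p.op (F.val.map g.op x) := by rw [hx]
            _ = F.val.map (p ≫ g).op x := by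
                rw [op_comp, FunctorToTypes.map_comp_apply]
        have : Epi m := Sheaf.epi_of_isLocallySurjective' m
        exact isIso_of_mono_of_epi m
end

section
/- Let C be a small category satisfying the right Ore condition and let J_at be a Grothendieck topology on C whose covering sieves on every object are exactly the nonempty sieves. Then a J_at-sheaf F is an atom of Sh(C, J_at) if and only if there exist an object c of C and an element x ∈ F(c) such that for every J_at-sheaf G, the map Hom_{Sh(C,J_at)}(F, G) → G(c) sending a morphism α to the component α_c evaluated at x is injective (i.e., every morphism from F to any sheaf is uniquely determined by its value at x). -/
open CategoryTheory CategoryTheory.Limits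

universe u

section AuxAtoms

variable {C : Type u} [SmallCategory C] (Jat : GrothendieckTopology C)

/-- The constant presheaf with value `V`. -/
def atomConstPre (V : Type u) : Cᵒᵖ ⥤ Type u := (Functor.const Cᵒᵖ).obj V

lemma atomConstPre_isSheaf
    (hOre : ∀ {a b c : C} (f : a ⟶ c) (g : b ⟶ c),
      ∃ (d : C) (p : d ⟶ a) (q : d ⟶ b), p ≫ f = q ≫ g)
    (hJat : ∀ (X : C) (S : Sieve X), S ∈ Jat X ↔ ∃ (Y : C) (f : Y ⟶ X), S f)
    (V : Type u) : Presheaf.IsSheaf Jat (atomConstPre (C := C) V) := by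
  rw [isSheaf_iff_isSheaf_of_type]
  intro X S hS fam compat
  obtain ⟨Y, f, hf⟩ := (hJat X S).1 hS
  refine ⟨fam (Y := Y) f hf, ?_, ?_⟩
  · intro Z g hg
    obtain ⟨d, p, q, hpq⟩ := hOre g f
    have := compat q p hf hg hpq.symm
    exact this
  · intro t' ht'
    exact ht' f hf

/-- The constant sheaf (for the atomic topology) with value `V`. -/
def atomConstSh
    (hOre : ∀ {a b c : C} (f : a ⟶ c) (g : b ⟶ c),
      ∃ (d : C) (p : d ⟶ a) (q : d ⟶ b), p ≫ f = q ≫ g)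
    (hJat : ∀ (X : C) (S : Sieve X), S ∈ Jat X ↔ ∃ (Y : C) (f : Y ⟶ X), S f)
    (V : Type u) : Sheaf Jat (Type u) :=
  ⟨atomConstPre V, atomConstPre_isSheaf Jat hOre hJat V⟩

/-- A sheaf with empty sections is initial. -/
noncomputable def atomIsInitialOfEmpty (S : Sheaf Jat (Type u))
    (h : ∀ e : Cᵒᵖ, IsEmpty (S.val.obj e)) : IsInitial S :=
  IsInitial.ofUniqueHom
    (fun G => ⟨{ app := fun e => TypeCat.ofHom fun w => (h e).elim w
                 naturality := by intro e e' f; ext w; exact (h e).elim w }⟩)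
    (fun G φ => by
      apply Sheaf.hom_ext
      apply NatTrans.ext
      funext e
      ext w
      exact (h e).elim w)

end AuxAtoms

open Opposite in
/-- If `C` satisfies the right Ore condition and `Jat` is the topology whose
covering sieves are exactly the nonempty ones, then a sheaf `F` is an atom of
`Sh(C, Jat)` if and only if there are `c : C` and `x ∈ F(c)` such that every
morphism from `F` to any sheaf is uniquely determined by its value at `x`. -/
theorem stmt15 {C : Type u} [SmallCategory C]
    (hOre : ∀ {a b c : C} (f : a ⟶ c) (g : b ⟶ c),
      ∃ (d : C) (p : d ⟶ a) (q : d ⟶ b), p ≫ f = q ≫ g)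
    (Jat : GrothendieckTopology C)
    (hJat : ∀ (X : C) (S : Sieve X), S ∈ Jat X ↔ ∃ (Y : C) (f : Y ⟶ X), S f)
    (F : Sheaf Jat (Type u)) :
    IsAtomObj F ↔
      ∃ (c : C) (x : F.val.obj (Opposite.op c)),
        ∀ (G : Sheaf Jat (Type u)),
          Function.Injective
            (fun α : F ⟶ G => α.hom.app (Opposite.op c) x) := by
  classical
  -- the empty sheaf
  let Esh : Sheaf Jat (Type u) := atomConstSh Jat hOre hJat PEmpty.{u + 1}
  constructor
  · rintro ⟨hnI, hAt⟩
    by_cases hall : ∀ e : Cᵒᵖ, IsEmpty (F.val.obj e)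
    · exact absurd ⟨atomIsInitialOfEmpty Jat F hall⟩ hnI
    · push_neg at hall
      obtain ⟨⟨c⟩, he⟩ := hall
      obtain ⟨x⟩ := he
      refine ⟨c, x, ?_⟩
      intro G α β hEq
      dsimp at hEq
      -- the equalizer subsheaf
      let Sp : Cᵒᵖ ⥤ Type u :=
        { obj := fun e => { w : F.val.obj e // α.hom.app e w = β.hom.app e w }
          map := fun {e e'} f => TypeCat.ofHom fun w => ⟨F.val.map f w.1, by
            have h1 := NatTrans.naturality_apply α.hom f w.1
            have h2 := NatTrans.naturality_apply β.hom f w.1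
            dsimp at h1 h2 ⊢
            rw [h1, h2, w.2]⟩
          map_id := by
            intro e
            ext w
            simp
          map_comp := by
            intro e e' e'' f g
            ext w
            simp }
      have hF := F.cond
      have hG := G.cond
      rw [isSheaf_iff_isSheaf_of_type] at hF hG
      have hSp : Presheaf.IsSheaf Jat Sp := by
        rw [isSheaf_iff_isSheaf_of_type]
        intro X S hS fam compat
        -- underlying family in F
        let famF : Presieve.FamilyOfElements F.val S.arrows :=
          fun Y f hf => (fam f hf).1
        have compatF : famF.Compatible := by
          intro Y₁ Y₂ Z g₁ g₂ f₁ f₂ h₁ h₂ hcomm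
          exact congrArg Subtype.val (compat g₁ g₂ h₁ h₂ hcomm)
        obtain ⟨t, ht, htu⟩ := hF S hS famF compatF
        have hteq : α.hom.app (op X) t = β.hom.app (op X) t := by
          -- both sides amalgamate the same family in G
          let famG : Presieve.FamilyOfElements G.val S.arrows :=
            fun Y f hf => α.hom.app (op Y) (famF f hf)
          have compatG : famG.Compatible := by
            intro Y₁ Y₂ Z g₁ g₂ f₁ f₂ h₁ h₂ hcomm
            have := congrArg (α.hom.app (op Z)) (compatF g₁ g₂ h₁ h₂ hcomm)
            have n1 := NatTrans.naturality_apply α.hom g₁.op (famF f₁ h₁)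
            have n2 := NatTrans.naturality_apply α.hom g₂.op (famF f₂ h₂)
            dsimp [famG]
            rw [← n1, ← n2]
            exact this
          obtain ⟨u, hu, huu⟩ := hG S hS famG compatG
          have ha : famG.IsAmalgamation (α.hom.app (op X) t) := by
            intro Y f hf
            have n := NatTrans.naturality_apply α.hom f.op t
            rw [← n, ht f hf]
          have hb : famG.IsAmalgamation (β.hom.app (op X) t) := by
            intro Y f hf
            have n := NatTrans.naturality_apply β.hom f.op t
            rw [← n, ht f hf]
            exact ((fam f hf).2).symm
          rw [huu _ ha, huu _ hb]
        refine ⟨⟨t, hteq⟩, ?_, ?_⟩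
        · intro Y f hf
          apply Subtype.ext
          exact ht f hf
        · intro t' ht'
          apply Subtype.ext
          apply htu
          intro Y f hf
          exact congrArg Subtype.val (ht' f hf)
      let Ssh : Sheaf Jat (Type u) := ⟨Sp, hSp⟩
      let ι : Ssh ⟶ F := ⟨{ app := fun e => TypeCat.ofHom fun w => w.1, naturality := by intros; rfl }⟩
      have hmono : Mono ι := by
        apply Sheaf.mono_of_injective
        intro X a b hab
        exact Subtype.ext hab
      rcases hAt ι hmono with hIso | hInit
      on_goal 2 => obtain ⟨hInit⟩ := hInit
      · -- conclude α = β
        haveI : IsIso ι.hom := (inferInstance : IsIso ((sheafToPresheaf Jat (Type u)).map ι))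
        apply Sheaf.hom_ext
        apply NatTrans.ext
        funext e
        ext w
        have hsurj : Function.Surjective (ι.hom.app e) :=
          ((isIso_iff_bijective _).1 (NatIso.isIso_app_of_isIso ι.hom e)).2
        obtain ⟨s, hs⟩ := hsurj w
        have := s.2
        dsimp [ι] at hs
        rw [← hs]
        exact s.2
      · exact PEmpty.elim ((hInit.to Esh).hom.app (op c) ⟨x, hEq⟩)
  · rintro ⟨c, x, hP⟩
    constructor
    · rintro ⟨hI⟩
      exact PEmpty.elim ((hI.to Esh).hom.app (op c) x)
    · intro S m hm
      by_cases hall : ∀ e : Cᵒᵖ, IsEmpty (S.val.obj e)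
      · exact Or.inr ⟨atomIsInitialOfEmpty Jat S hall⟩
      · left
        push_neg at hall
        obtain ⟨⟨d⟩, hd⟩ := hall
        obtain ⟨y⟩ := hd
        -- m is componentwise injective
        haveI : Mono m.hom := (sheafToPresheaf Jat (Type u)).map_mono m
        have minj : ∀ e : Cᵒᵖ, Function.Injective (m.hom.app e) := by
          intro e
          rw [← CategoryTheory.mono_iff_injective]
          infer_instance
        have hF := F.cond
        have hSc := S.cond
        rw [isSheaf_iff_isSheaf_of_type] at hF hSc
        -- the predicate "locally comparable to x"
        let Rp : ∀ e : Cᵒᵖ, F.val.obj e → Prop := fun e w =>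
          ∃ (e' : C) (f : e' ⟶ e.unop) (g : e' ⟶ c),
            F.val.map f.op w = F.val.map g.op x
        have hRmap : ∀ (e e' : Cᵒᵖ) (f : e ⟶ e') (w : F.val.obj e),
            Rp e' (F.val.map f w) ↔ Rp e w := by
          intro e e' f w
          constructor
          · rintro ⟨e₀, f₀, g₀, h₀⟩
            refine ⟨e₀, f₀ ≫ f.unop, g₀, ?_⟩
            rw [op_comp, FunctorToTypes.map_comp_apply]
            exact h₀
          · rintro ⟨e₀, f₀, g₀, h₀⟩
            obtain ⟨d₀, p, q, hpq⟩ := hOre f.unop f₀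
            refine ⟨d₀, p, q ≫ g₀, ?_⟩
            have e1 : F.val.map p.op (F.val.map f (w : F.val.obj e)) =
                F.val.map (p ≫ f.unop).op w := by
              rw [op_comp, FunctorToTypes.map_comp_apply]
              rfl
            rw [e1, hpq, op_comp, FunctorToTypes.map_comp_apply, h₀,
              op_comp, FunctorToTypes.map_comp_apply]
        -- the constant sheaf on `Set PUnit` and the two morphisms
        let Om : Sheaf Jat (Type u) := atomConstSh Jat hOre hJat (Set PUnit.{u + 1})
        let χ : F ⟶ Om := ⟨{ app := fun e => TypeCat.ofHom fun w => {_p : PUnit.{u + 1} | Rp e w}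
                             naturality := by
                               intro e e' f
                               ext w
                               exact Set.ext fun p => hRmap e e' f w }⟩
        let τ : F ⟶ Om := ⟨{ app := fun e => TypeCat.ofHom fun _w => (Set.univ : Set PUnit.{u + 1})
                             naturality := by intros; rfl }⟩
        have hχτ : χ = τ := by
          apply hP Om
          show ({_p : PUnit.{u + 1} | Rp (op c) x} : Set PUnit.{u + 1}) = Set.univ
          exact Set.eq_univ_of_forall fun p => ⟨c, 𝟙 c, 𝟙 c, rfl⟩
        have hR : ∀ (e : Cᵒᵖ) (w : F.val.obj e), Rp e w := by
          intro e w
          have h := congrArg (fun φ : F ⟶ Om => φ.hom.app e w) hχτ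
          exact (Set.ext_iff.mp h PUnit.unit).mpr trivial
        -- x is locally in the image of m
        obtain ⟨d₁, f₁, g₁, h₁⟩ := hR (op d) (m.hom.app (op d) y)
        have hx : m.hom.app (op d₁) (S.val.map f₁.op y) = F.val.map g₁.op x := by
          have n := NatTrans.naturality_apply m.hom f₁.op y
          dsimp at n
          exact n.trans h₁
        -- every section of F is locally in the image of m
        have hsur : ∀ (e : Cᵒᵖ) (w : F.val.obj e),
            ∃ (e' : C) (f : e' ⟶ e.unop) (s : S.val.obj (op e')),
              m.hom.app (op e') s = F.val.map f.op w := by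
          intro e w
          obtain ⟨e₂, f₂, g₂, h₂⟩ := hR e w
          obtain ⟨d₂, p, q, hpq⟩ := hOre g₂ g₁
          refine ⟨d₂, p ≫ f₂, S.val.map q.op (S.val.map f₁.op y), ?_⟩
          have n := NatTrans.naturality_apply m.hom q.op (S.val.map f₁.op y)
          dsimp at n
          rw [n, hx, ← FunctorToTypes.map_comp_apply, ← op_comp, ← hpq,
            op_comp, FunctorToTypes.map_comp_apply, ← h₂,
            op_comp, FunctorToTypes.map_comp_apply]
        -- m is componentwise surjective
        have msur : ∀ e : Cᵒᵖ, Function.Surjective (m.hom.app e) := by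
          intro e w
          let T : Sieve e.unop :=
            { arrows := fun Y f =>
                ∃ s : S.val.obj (op Y), m.hom.app (op Y) s = F.val.map f.op w
              downward_closed := by
                rintro Y Z f ⟨s, hs⟩ g
                refine ⟨S.val.map g.op s, ?_⟩
                have n := NatTrans.naturality_apply m.hom g.op s
                rw [n, hs, ← FunctorToTypes.map_comp_apply, ← op_comp] }
          have hT : T ∈ Jat e.unop := by
            obtain ⟨e', f, s, h⟩ := hsur e w
            exact (hJat _ T).2 ⟨e', f, ⟨s, h⟩⟩
          let famS : Presieve.FamilyOfElements S.val T.arrows :=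
            fun Y f hf => Classical.choose hf
          have hfamS : ∀ {Y : C} (f : Y ⟶ e.unop) (hf : T.arrows f),
              m.hom.app (op Y) (famS f hf) = F.val.map f.op w :=
            fun f hf => Classical.choose_spec hf
          have compatS : famS.Compatible := by
            intro Y₁ Y₂ Z g₁ g₂ f₁' f₂' h₁' h₂' hcomm
            apply minj (op Z)
            have n1 := NatTrans.naturality_apply m.hom g₁.op (famS f₁' h₁')
            have n2 := NatTrans.naturality_apply m.hom g₂.op (famS f₂' h₂')
            rw [n1, n2, hfamS f₁' h₁', hfamS f₂' h₂',
              ← FunctorToTypes.map_comp_apply, ← FunctorToTypes.map_comp_apply,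
              ← op_comp, ← op_comp, hcomm]
          obtain ⟨s, hs, _⟩ := hSc T hT famS compatS
          refine ⟨s, ?_⟩
          let famF : Presieve.FamilyOfElements F.val T.arrows :=
            fun Y f hf => F.val.map f.op w
          have compatF : famF.Compatible := by
            intro Y₁ Y₂ Z g₁ g₂ f₁' f₂' h₁' h₂' hcomm
            dsimp [famF]
            rw [← FunctorToTypes.map_comp_apply, ← FunctorToTypes.map_comp_apply,
              ← op_comp, ← op_comp, hcomm]
          obtain ⟨t, ht, htu⟩ := hF T hT famF compatF
          have h1 : famF.IsAmalgamation (m.hom.app e s) := by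
            intro Y f hf
            have n := NatTrans.naturality_apply m.hom f.op s
            dsimp at n
            show F.val.map f.op (m.hom.app e s) = F.val.map f.op w
            rw [← n, hs f hf, hfamS f hf]
          have h2 : famF.IsAmalgamation w := fun Y f hf => rfl
          rw [htu _ h1, htu _ h2]
        haveI : ∀ e : Cᵒᵖ, IsIso (m.hom.app e) :=
          fun e => (isIso_iff_bijective _).2 ⟨minj e, msur e⟩
        haveI : IsIso ((sheafToPresheaf Jat (Type u)).map m) :=
          NatIso.isIso_of_isIso_app m.hom
        exact isIso_of_reflects_iso m (sheafToPresheaf Jat (Type u))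
end

section
/- Let C be a small category and J ≤ K two Grothendieck topologies on C. If Sh(C,J) has a separating set S of objects each of which is an atom of Sh(C,J), then the set of those objects of the form a_K(s) for s ∈ S (the K-sheafification of the underlying presheaf of s) which are not initial in Sh(C,K) is a separating set of objects of Sh(C,K), each of which is an atom of Sh(C,K). -/
open CategoryTheory CategoryTheory.Limits

universe u

namespace Stmt16Aux

variable {C : Type u} [SmallCategory C] {J K : GrothendieckTopology C}

/-- The underlying `J`-sheaf of a `K`-sheaf when `J ≤ K`. -/
abbrev toJ (hJK : J ≤ K) (X : Sheaf K (Type u)) : Sheaf J (Type u) :=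
  ⟨X.val, (isSheaf_iff_isSheaf_of_type J X.val).2
    (Presieve.isSheaf_of_le X.val hJK ((isSheaf_iff_isSheaf_of_type K X.val).1 X.cond))⟩

noncomputable def initialF (hJK : J ≤ K) {P : Sheaf J (Type u)} (hP : IsInitial P) :
    IsInitial ((presheafToSheaf K (Type u)).obj P.val) := by
  refine IsInitial.ofUniqueHom
    (fun Z => ((sheafificationAdjunction K (Type u)).homEquiv P.val Z).symm
      (hP.to (toJ hJK Z)).hom) (fun Z m => ?_)
  have h1 : (⟨((sheafificationAdjunction K (Type u)).homEquiv P.val Z) m⟩ :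
      P ⟶ toJ hJK Z) = hP.to (toJ hJK Z) := hP.hom_ext _ _
  have h2 : ((sheafificationAdjunction K (Type u)).homEquiv P.val Z) m
      = (hP.to (toJ hJK Z)).hom := congrArg InducedCategory.Hom.hom h1
  calc m = ((sheafificationAdjunction K (Type u)).homEquiv P.val Z).symm
        (((sheafificationAdjunction K (Type u)).homEquiv P.val Z) m) := by simp
    _ = _ := by rw [h2]

end Stmt16Aux

/-- If `J ≤ K` and `Sh(C,J)` has a separating set `S` of atoms, then the
non-initial `K`-sheafifications of members of `S` form a separating set of
atoms of `Sh(C,K)`. -/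
theorem stmt16 {C : Type u} [SmallCategory C] (J K : GrothendieckTopology C)
    (hJK : J ≤ K) (S : Set (Sheaf J (Type u))) (hsep : ObjectProperty.IsSeparating S)
    (hatom : ∀ a ∈ S, IsAtomObj a) :
    ObjectProperty.IsSeparating
      {X : Sheaf K (Type u) |
        X ∈ (fun s : Sheaf J (Type u) => (presheafToSheaf K (Type u)).obj s.val) '' S ∧
          ¬ Nonempty (IsInitial X)} ∧
    ∀ X ∈ {X : Sheaf K (Type u) |
        X ∈ (fun s : Sheaf J (Type u) => (presheafToSheaf K (Type u)).obj s.val) '' S ∧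
          ¬ Nonempty (IsInitial X)}, IsAtomObj X := by
  set adj := sheafificationAdjunction K (Type u) with hadj
  constructor
  · -- separating
    intro X Y f g hfg
    have key : ∀ s ∈ S, ∀ h : s ⟶ Stmt16Aux.toJ hJK X,
        h ≫ (⟨f.hom⟩ : Stmt16Aux.toJ hJK X ⟶ Stmt16Aux.toJ hJK Y)
          = h ≫ (⟨g.hom⟩ : Stmt16Aux.toJ hJK X ⟶ Stmt16Aux.toJ hJK Y) := by
      intro s hs h
      set a : Sheaf K (Type u) := (presheafToSheaf K (Type u)).obj s.val with ha
      have hcomp : (adj.homEquiv s.val X).symm h.hom ≫ f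
          = (adj.homEquiv s.val X).symm h.hom ≫ g := by
        by_cases hinit : Nonempty (IsInitial a)
        · exact hinit.some.hom_ext _ _
        · exact hfg a ⟨⟨s, hs, rfl⟩, hinit⟩ _
      have h2 : (adj.homEquiv s.val Y).symm (h.hom ≫ f.hom)
          = (adj.homEquiv s.val Y).symm (h.hom ≫ g.hom) := by
        rw [show (h.hom ≫ f.hom : s.val ⟶ Y.val)
              = h.hom ≫ (sheafToPresheaf K (Type u)).map f from rfl,
            show (h.hom ≫ g.hom : s.val ⟶ Y.val)
              = h.hom ≫ (sheafToPresheaf K (Type u)).map g from rfl,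
            Adjunction.homEquiv_naturality_right_symm,
            Adjunction.homEquiv_naturality_right_symm]
        exact hcomp
      have h3 : h.hom ≫ f.hom = h.hom ≫ g.hom :=
        (adj.homEquiv s.val Y).symm.injective h2
      exact Sheaf.hom_ext h3
    have h4 := hsep (⟨f.hom⟩ : Stmt16Aux.toJ hJK X ⟶ Stmt16Aux.toJ hJK Y) ⟨g.hom⟩ key
    have h5 : f.hom = g.hom := congrArg
      (fun p : Stmt16Aux.toJ hJK X ⟶ Stmt16Aux.toJ hJK Y => p.hom) h4
    exact Sheaf.hom_ext h5
  · -- atoms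
    rintro X ⟨⟨s, hs, rfl⟩, hninit⟩
    refine ⟨hninit, ?_⟩
    intro T m hm
    set X : Sheaf K (Type u) := (presheafToSheaf K (Type u)).obj s.val with hX
    -- the unit map as a morphism of J-sheaves
    set η : s.val ⟶ X.val := adj.unit.app s.val with hη
    set mJ : Stmt16Aux.toJ hJK T ⟶ Stmt16Aux.toJ hJK X := ⟨m.hom⟩ with hmJ
    set η' : s ⟶ Stmt16Aux.toJ hJK X := ⟨η⟩ with hη'
    haveI hmonoJ : Mono mJ := by
      constructor
      intro W a b hab
      have hab' : a.hom ≫ m.hom = b.hom ≫ m.hom := congrArg InducedCategory.Hom.hom hab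
      have h2 : (adj.homEquiv W.val T).symm a.hom ≫ m
          = (adj.homEquiv W.val T).symm b.hom ≫ m := by
        rw [← Adjunction.homEquiv_naturality_right_symm,
            ← Adjunction.homEquiv_naturality_right_symm]
        exact congrArg _ hab'
      have h3 := (cancel_mono m).1 h2
      exact Sheaf.hom_ext ((adj.homEquiv W.val T).symm.injective h3)
    -- pull back along the unit
    rcases (hatom s hs).2 (pullback.snd mJ η') inferInstance with hiso | hPinit
    · -- the mono restricts to an iso on s, hence is split epi, hence iso
      left
      set k : s ⟶ Stmt16Aux.toJ hJK T := inv (pullback.snd mJ η') ≫ pullback.fst mJ η'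
        with hk
      have hkm : k ≫ mJ = η' := by
        rw [hk, Category.assoc, pullback.condition, IsIso.inv_hom_id_assoc]
      have hkmval : k.hom ≫ m.hom = η := congrArg InducedCategory.Hom.hom hkm
      have hsect : (adj.homEquiv s.val T).symm k.hom ≫ m = 𝟙 X := by
        have e1 : (adj.homEquiv s.val T).symm k.hom ≫ m
            = (adj.homEquiv s.val X).symm
                (k.hom ≫ (sheafToPresheaf K (Type u)).map m) :=
          (Adjunction.homEquiv_naturality_right_symm _ _ _).symm
        have e2 : (k.hom ≫ (sheafToPresheaf K (Type u)).map m : s.val ⟶ X.val) = η :=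
          hkmval
        rw [e1, e2, Equiv.symm_apply_eq, hη, Adjunction.homEquiv_unit]
        simp
        exact (Category.comp_id _).symm
      haveI : IsSplitEpi m := ⟨⟨⟨_, hsect⟩⟩⟩
      exact isIso_of_mono_of_isSplitEpi m
    · -- the pullback is initial, hence T is initial
      right
      obtain ⟨hP⟩ := hPinit
      set Fun : Sheaf J (Type u) ⥤ Sheaf K (Type u) :=
        sheafToPresheaf J (Type u) ⋙ presheafToSheaf K (Type u) with hFun
      haveI : PreservesFiniteLimits Fun :=
        comp_preservesFiniteLimits _ _
      have hpb := (IsPullback.of_hasPullback mJ η').map Fun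
      -- Fun.map η' is an iso
      haveI : IsIso adj.counit := by rw [hadj]; infer_instance
      haveI : ∀ Z, IsIso (adj.counit.app Z) := fun Z => by rw [hadj]; infer_instance
      haveI hgiso : IsIso (Fun.map η') := by
        have htri : Fun.map η' ≫ adj.counit.app X = 𝟙 X :=
          adj.left_triangle_components s.val
        rw [IsIso.eq_inv_of_inv_hom_id htri]
        infer_instance
      set l := hpb.lift (𝟙 _) (Fun.map mJ ≫ inv (Fun.map η'))
        (by simp) with hl
      have hl1 : l ≫ Fun.map (pullback.fst mJ η') = 𝟙 _ := hpb.lift_fst _ _ _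
      have hQ : IsInitial (Fun.obj (pullback mJ η')) := Stmt16Aux.initialF hJK hP
      have hT' : IsInitial (Fun.obj (Stmt16Aux.toJ hJK T)) :=
        hQ.ofIso ⟨Fun.map (pullback.fst mJ η'), l, hQ.hom_ext _ _, hl1⟩
      exact ⟨hT'.ofIso (asIso (adj.counit.app T))⟩
end
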